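/- arXiv:1310.5304 — 6 statements merged into one kernel-verified Lean document; each statement's English description precedes it below -/
import Mathlib

section
/- Let (Ω', F', P') be a probability space, let (X_n)_{n∈ℕ} be a sequence of nonnegative integrable real-valued random variables on it, and let (G_n)_{n∈ℕ} be sub-σ-algebras of F'. If the conditional expectations E'[X_n | G_n] converge to 0 in probability as n → ∞, then X_n converges to 0 in probability as n → ∞. -/
open MeasureTheory Filter ENNReal

/-- Lemma 3.2 (Ogihara, LAMN for nonsynchronously observed diffusions):
if the conditional expectations `E[Xₙ | Gₙ]` of nonnegative integrable random
variables converge to `0` in probability, then `Xₙ → 0` in probability. -/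
theorem condexp_tendsto_in_prob_implies_tendsto_in_prob
    {Ω' : Type*} [m0 : MeasurableSpace Ω'] (P' : Measure Ω') [IsProbabilityMeasure P']
    (X : ℕ → Ω' → ℝ) (G : ℕ → MeasurableSpace Ω')
    (hG : ∀ n, G n ≤ m0)
    (hX_nonneg : ∀ n ω, 0 ≤ X n ω)
    (hX_int : ∀ n, Integrable (X n) P')
    (hcond : ∀ ε : ℝ, 0 < ε →
      Tendsto (fun n => P' {ω | ε < |(P'[X n | G n]) ω|}) atTop (nhds 0)) :
    ∀ ε : ℝ, 0 < ε →
      Tendsto (fun n => P' {ω | ε < |X n ω|}) atTop (nhds 0) := by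
  intro ε hε
  rw [ENNReal.tendsto_nhds_zero]
  intro η hη
  set η' : ℝ≥0∞ := min η 1 with hη'def
  have hη'pos : 0 < η' := lt_min hη zero_lt_one
  have hη'ne : η' ≠ ⊤ := ne_of_lt (lt_of_le_of_lt (min_le_right _ _) (by norm_num))
  have hhalf_ne : η' / 2 ≠ ⊤ := by
    simp [ENNReal.div_eq_top, hη'ne]
  have hhalf_pos : 0 < η' / 2 := ENNReal.div_pos hη'pos.ne' (by norm_num)
  set r : ℝ := (η' / 2).toReal with hrdef
  have hrpos : 0 < r := ENNReal.toReal_pos hhalf_pos.ne' hhalf_ne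
  have hr_of : ENNReal.ofReal r = η' / 2 := ENNReal.ofReal_toReal hhalf_ne
  set δ : ℝ := ε * r with hδdef
  have hδpos : 0 < δ := mul_pos hε hrpos
  have hev := ENNReal.tendsto_nhds_zero.mp (hcond δ hδpos) (η' / 2) hhalf_pos
  filter_upwards [hev] with n hn
  set Y : Ω' → ℝ := P'[X n | G n] with hYdef
  set A : Set Ω' := {ω | Y ω ≤ δ} with hAdef
  have hA_G : MeasurableSet[G n] A :=
    measurableSet_le stronglyMeasurable_condExp.measurable measurable_const
  have hA : MeasurableSet A := hG n A hA_G
  -- the complement is where Y > δ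
  have hcompl : {ω | ε < |X n ω|} \ A ⊆ {ω | δ < |Y ω|} := by
    intro ω hω
    have : ¬ Y ω ≤ δ := hω.2
    have h1 : δ < Y ω := lt_of_not_ge this
    exact lt_of_lt_of_le h1 (le_abs_self _)
  -- Markov on the restricted measure
  have hXr : Integrable (X n) (P'.restrict A) := (hX_int n).restrict
  have hmarkov := mul_meas_ge_le_integral_of_nonneg
    (ae_of_all _ fun ω => hX_nonneg n ω) hXr ε
  -- ∫ X on A = ∫ Y on A ≤ δ
  have hint_eq : ∫ ω in A, X n ω ∂P' = ∫ ω in A, Y ω ∂P' :=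
    (setIntegral_condExp (hG n) (hX_int n) hA_G).symm
  have hY_le : ∫ ω in A, Y ω ∂P' ≤ δ := by
    have h1 : ∫ ω in A, Y ω ∂P' ≤ ∫ _ω in A, δ ∂P' := by
      refine integral_mono_ae integrable_condExp.restrict (integrable_const _) ?_
      exact (ae_restrict_mem hA).mono fun ω hω => hω
    have h2 : ∫ _ω in A, δ ∂P' = δ * (P' A).toReal := by
      simp [mul_comm, Measure.real]
    have h3 : (P' A).toReal ≤ 1 := by
      have := prob_le_one (μ := P') (s := A)
      simpa using ENNReal.toReal_mono (by norm_num) this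
    calc ∫ ω in A, Y ω ∂P' ≤ δ * (P' A).toReal := by rw [← h2]; exact h1
      _ ≤ δ * 1 := by nlinarith [hδpos.le]
      _ = δ := mul_one δ
  have hmark2 : ε * ((P'.restrict A) {ω | ε ≤ X n ω}).toReal ≤ δ := by
    calc ε * ((P'.restrict A) {ω | ε ≤ X n ω}).toReal
        ≤ ∫ ω in A, X n ω ∂P' := hmarkov
      _ = ∫ ω in A, Y ω ∂P' := hint_eq
      _ ≤ δ := hY_le
  have hres_ne : (P'.restrict A) {ω | ε ≤ X n ω} ≠ ⊤ :=
    (lt_of_le_of_lt (measure_mono (Set.subset_univ _))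
      (lt_of_le_of_lt (Measure.restrict_le_self _) (measure_lt_top P' _))).ne
  have hres_le : (P'.restrict A) {ω | ε ≤ X n ω} ≤ η' / 2 := by
    rw [← hr_of]
    rw [← ENNReal.ofReal_toReal hres_ne]
    refine ENNReal.ofReal_le_ofReal ?_
    have : ((P'.restrict A) {ω | ε ≤ X n ω}).toReal ≤ δ / ε :=
      (le_div_iff₀ hε).mpr (by linarith [hmark2])
    have heq : δ / ε = r := by field_simp [hδdef]; exact hδdef
    rwa [heq] at this
  -- combine
  have hsub : {ω | ε < |X n ω|} ∩ A ⊆ {ω | ε ≤ X n ω} ∩ A := by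
    intro ω hω
    refine ⟨?_, hω.2⟩
    have := hω.1
    have habs : |X n ω| = X n ω := abs_of_nonneg (hX_nonneg n ω)
    simp only [Set.mem_setOf_eq, habs] at this ⊢
    exact this.le
  have h1 : P' ({ω | ε < |X n ω|} ∩ A) ≤ η' / 2 := by
    refine le_trans (measure_mono hsub) ?_
    rw [← Measure.restrict_apply' hA] at *
    exact le_trans (le_of_eq rfl) hres_le
  have h2 : P' ({ω | ε < |X n ω|} \ A) ≤ η' / 2 :=
    le_trans (measure_mono hcompl) hn
  calc P' {ω | ε < |X n ω|}
      ≤ P' ({ω | ε < |X n ω|} ∩ A) + P' ({ω | ε < |X n ω|} \ A) :=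
        measure_le_inter_add_diff P' _ A
    _ ≤ η' / 2 + η' / 2 := add_le_add h1 h2
    _ = η' := ENNReal.add_halves η'
    _ ≤ η := min_le_left _ _
end

section
/- Let Θ be a set, let (Ω', F', P') be a probability space, let {X_{n,λ}}_{n∈ℕ, λ∈Θ} be a family of integrable real-valued random variables on it, and let (G_n)_{n∈ℕ} be sub-σ-algebras of F'. Assume that for every ε > 0 there exists M > 0 such that sup_{n∈ℕ, λ∈Θ} P'[ E'[|X_{n,λ}| | G_n] > M ] < ε. Then for every ε > 0 there exists M > 0 such that sup_{n∈ℕ, λ∈Θ} P'[ |X_{n,λ}| > M ] < ε. -/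
open MeasureTheory Filter

/-- Lemma 3.3 (Ogihara, LAMN for nonsynchronously observed diffusions):
uniform tightness of the conditional expectations `E[|X_{n,λ}| | Gₙ]` implies
uniform tightness of the family `{X_{n,λ}}`. -/
theorem tight_of_condexp_tight
    {Ω' : Type*} {Θ : Type*} [m0 : MeasurableSpace Ω'] (P' : Measure Ω')
    [IsProbabilityMeasure P']
    (X : ℕ → Θ → Ω' → ℝ) (G : ℕ → MeasurableSpace Ω')
    (hG : ∀ n, G n ≤ m0)
    (hX_int : ∀ n lam, Integrable (X n lam) P')
    (h : ∀ ε : ℝ, 0 < ε → ∃ M : ℝ, 0 < M ∧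
      (⨆ n : ℕ, ⨆ lam : Θ,
        P' {ω | M < (P'[fun ω' => |X n lam ω'| | G n]) ω}) < ENNReal.ofReal ε) :
    ∀ ε : ℝ, 0 < ε → ∃ M : ℝ, 0 < M ∧
      (⨆ n : ℕ, ⨆ lam : Θ, P' {ω | M < |X n lam ω|}) < ENNReal.ofReal ε := by
  intro ε hε
  have hε2 : (0:ℝ) < ε / 2 := by linarith
  obtain ⟨K, hK, hKsup⟩ := h (ε / 2) hε2
  set M : ℝ := 2 * K / ε with hM_def
  have hM : 0 < M := by positivity
  refine ⟨M, hM, ?_⟩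
  have key : ∀ n lam, P' {ω | M < |X n lam ω|} ≤
      P' {ω | K < (P'[fun ω' => |X n lam ω'| | G n]) ω} + ENNReal.ofReal (ε / 2) := by
    intro n lam
    set Y : Ω' → ℝ := P'[fun ω' => |X n lam ω'| | G n] with hY
    set A : Set Ω' := {ω | Y ω ≤ K} with hA
    have hA_meas : MeasurableSet[G n] A := by
      have := (stronglyMeasurable_condExp (m := G n) (f := fun ω' => |X n lam ω'|)
        (μ := P')).measurable (measurableSet_Iic (a := K))
      exact this
    have hA_meas0 : MeasurableSet A := hG n _ hA_meas
    have habs_int : Integrable (fun ω => |X n lam ω|) P' := (hX_int n lam).abs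
    -- split
    have hsplit : P' {ω | M < |X n lam ω|} ≤
        P' {ω | K < Y ω} + P' (A ∩ {ω | M < |X n lam ω|}) := by
      refine le_trans (measure_mono ?_) (measure_union_le _ _)
      intro ω hω
      by_cases hYω : Y ω ≤ K
      · exact Or.inr ⟨hYω, hω⟩
      · exact Or.inl (lt_of_not_ge hYω)
    refine hsplit.trans (add_le_add_right ?_ _)
    -- bound the second piece
    have hmarkov : M * ((P'.restrict A) {ω | M ≤ |X n lam ω|}).toReal ≤
        ∫ ω in A, |X n lam ω| ∂P' :=
      mul_meas_ge_le_integral_of_nonneg (ae_of_all _ fun ω => abs_nonneg _)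
        habs_int.restrict M
    have hYeq : ∫ ω in A, Y ω ∂P' = ∫ ω in A, |X n lam ω| ∂P' :=
      setIntegral_condExp (hG n) habs_int hA_meas
    have hYle : ∫ ω in A, Y ω ∂P' ≤ K * (P' A).toReal := by
      calc ∫ ω in A, Y ω ∂P' ≤ ∫ _ in A, K ∂P' := by
            refine setIntegral_mono_on integrable_condExp.restrict
              (integrable_const _) hA_meas0 fun ω hω => hω
        _ = K * (P' A).toReal := by simp [mul_comm, Measure.real]
    have hAle1 : (P' A).toReal ≤ 1 := by
      have := prob_le_one (μ := P') (s := A)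
      simpa using ENNReal.toReal_mono (by simp) this
    have hint_le : ∫ ω in A, |X n lam ω| ∂P' ≤ K := by
      rw [← hYeq]
      calc ∫ ω in A, Y ω ∂P' ≤ K * (P' A).toReal := hYle
        _ ≤ K * 1 := by nlinarith
        _ = K := mul_one K
    have hrestr : P' (A ∩ {ω | M < |X n lam ω|}) ≤
        (P'.restrict A) {ω | M ≤ |X n lam ω|} := by
      rw [Measure.restrict_apply' hA_meas0]
      exact measure_mono fun ω hω => ⟨le_of_lt (show M < |X n lam ω| from hω.2), hω.1⟩
    have hfin : (P'.restrict A) {ω | M ≤ |X n lam ω|} ≠ ⊤ :=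
      ((measure_mono (Set.subset_univ _)).trans_lt (by simp [measure_lt_top])).ne
    have htoReal : ((P'.restrict A) {ω | M ≤ |X n lam ω|}).toReal ≤ ε / 2 := by
      have hmul : M * ((P'.restrict A) {ω | M ≤ |X n lam ω|}).toReal ≤ K :=
        hmarkov.trans hint_le
      have : ((P'.restrict A) {ω | M ≤ |X n lam ω|}).toReal ≤ K / M :=
        (le_div_iff₀' hM).mpr hmul
      have hKM : K / M = ε / 2 := by
        field_simp [hM_def]
        rw [hM_def, div_mul_cancel₀ _ hε.ne']; ring
      linarith [this, hKM ▸ this]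
    calc P' (A ∩ {ω | M < |X n lam ω|}) ≤ (P'.restrict A) {ω | M ≤ |X n lam ω|} := hrestr
      _ = ENNReal.ofReal (((P'.restrict A) {ω | M ≤ |X n lam ω|}).toReal) :=
            (ENNReal.ofReal_toReal hfin).symm
      _ ≤ ENNReal.ofReal (ε / 2) := ENNReal.ofReal_le_ofReal htoReal
  calc (⨆ n : ℕ, ⨆ lam : Θ, P' {ω | M < |X n lam ω|})
      ≤ (⨆ n : ℕ, ⨆ lam : Θ,
          P' {ω | K < (P'[fun ω' => |X n lam ω'| | G n]) ω}) + ENNReal.ofReal (ε / 2) := by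
        refine iSup_le fun n => iSup_le fun lam => ?_
        refine (key n lam).trans (add_le_add_left ?_ _)
        exact le_iSup₂ (f := fun (n : ℕ) (lam : Θ) =>
          P' {ω | K < (P'[fun ω' => |X n lam ω'| | G n]) ω}) n lam
    _ < ENNReal.ofReal (ε / 2) + ENNReal.ofReal (ε / 2) :=
        ENNReal.add_lt_add_right ENNReal.ofReal_ne_top hKsup
    _ = ENNReal.ofReal ε := by
        rw [← ENNReal.ofReal_add hε2.le hε2.le]; norm_num
end

section
/- Let L, g ∈ ℕ with g ≥ 1, let (Ω̃, F̃, P̃) be a probability space with expectation Ẽ, and let (F̃_l)_{l=0}^{L} be a filtration of sub-σ-algebras of F̃. Let {X¹_k}_{k=1}^{L} and {X²_{k,k'}}_{1≤k,k'≤L} be real-valued random variables such that ( ∑_{k=1}^{l} X¹_k )_{l=0}^{L} is an (F̃_l)-martingale and, for each 1 ≤ k ≤ L, ( ∑_{k'=1}^{l} X²_{k,k'} )_{l=0}^{L} is an (F̃_l)-martingale. Suppose there exist a positive constant C¹ and positive numbers {C²_k}_{1≤k≤L} with Ẽ[|X¹_k|⁴]^{1/4} ≤ C¹ and Ẽ[|X²_{k,k'}|⁴]^{1/4}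 ≤ C²_{k'} for all 1 ≤ k, k' ≤ L. Then Ẽ[ | ∑_{k=1}^{L} X¹_k ∑_{k': 0<|k'-k|≤g} X²_{k,k'} | ] ≤ 2(2g+1) C¹ ( ∑_{1≤l₁,l₂≤L, |l₁-l₂|≤2g} C²_{l₁} C²_{l₂} )^{1/2}. -/
open MeasureTheory Filter Finset
open scoped ENNReal NNReal

section OgiharaAux

variable {Ω : Type*} [m0 : MeasurableSpace Ω] {P : Measure Ω} [IsProbabilityMeasure P]

private theorem ogi_four_div_two : (4:ℝ≥0∞)/2 = 2 := by
  rw [show (2:ℝ≥0∞) = 2/1 by simp, ENNReal.div_eq_div_iff] <;> norm_num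

private theorem ogi_rpow_two_eq (x : ℝ) : ‖x‖ ^ (2:ℝ) = x ^ (2:ℕ) := by
  rw [show ((2:ℝ)) = ((2:ℕ):ℝ) by norm_num, Real.rpow_natCast]; simp [sq_abs]

private theorem ogi_memℒp_mul {f g : Ω → ℝ} (hf : MemLp f 4 P) (hg : MemLp g 4 P) :
    MemLp (f * g) 2 P := by
  have := MemLp.smul (𝕜 := ℝ) hg hf (p := 4) (q := 4) (r := 2)
    (hpqr := ⟨by simp only [← one_div]; rw [ENNReal.div_add_div_same, ENNReal.div_eq_div_iff] <;> norm_num⟩)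
  simpa [smul_eq_mul] using this

private theorem ogi_integrable_mul {f g : Ω → ℝ} (hf : MemLp f 2 P) (hg : MemLp g 2 P) :
    Integrable (fun ω => f ω * g ω) P := by
  have := MemLp.smul (𝕜 := ℝ) hg hf (p := 2) (q := 2) (r := 1)
    (hpqr := ⟨by simp only [← one_div]; rw [ENNReal.div_add_div_same, ENNReal.div_eq_div_iff] <;> norm_num⟩)
  exact (memLp_one_iff_integrable.mp (by simpa [smul_eq_mul] using this : MemLp (f * g) 1 P))

private theorem ogi_sq_int_mul_le {f g : Ω → ℝ} (hf : MemLp f 4 P) (hg : MemLp g 4 P) :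
    ∫ ω, ‖f ω * g ω‖ ^ (2:ℝ) ∂P
      ≤ (∫ ω, |f ω| ^ (4:ℕ) ∂P) ^ ((1:ℝ)/2) * (∫ ω, |g ω| ^ (4:ℕ) ∂P) ^ ((1:ℝ)/2) := by
  have hf2 : MemLp (fun x => ‖f x‖ ^ (2:ℝ)) (ENNReal.ofReal 2) P := by
    have := (hf.norm_rpow_div 2)
    rw [ogi_four_div_two] at this
    simpa [ENNReal.toReal_ofNat, ENNReal.ofReal_ofNat] using this
  have hg2 : MemLp (fun x => ‖g x‖ ^ (2:ℝ)) (ENNReal.ofReal 2) P := by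
    have := (hg.norm_rpow_div 2)
    rw [ogi_four_div_two] at this
    simpa [ENNReal.toReal_ofNat, ENNReal.ofReal_ofNat] using this
  have key := integral_mul_norm_le_Lp_mul_Lq (μ := P)
    (Real.holderConjugate_iff.mpr ⟨one_lt_two, by norm_num⟩) hf2 hg2
  have e2 : ∀ x y : ℝ, ‖x * y‖ ^ (2:ℝ) = ‖‖x‖ ^ (2:ℝ)‖ * ‖‖y‖ ^ (2:ℝ)‖ := by
    intro x y
    rw [ogi_rpow_two_eq, ogi_rpow_two_eq, ogi_rpow_two_eq]
    rw [Real.norm_eq_abs, Real.norm_eq_abs, abs_of_nonneg (sq_nonneg x),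
      abs_of_nonneg (sq_nonneg y)]
    ring
  have e4 : ∀ x : ℝ, ‖‖x‖ ^ (2:ℝ)‖ ^ (2:ℝ) = |x| ^ (4:ℕ) := by
    intro x
    rw [ogi_rpow_two_eq, ogi_rpow_two_eq, ← pow_mul]
    exact (Even.pow_abs (by decide) x).symm
  calc ∫ ω, ‖f ω * g ω‖ ^ (2:ℝ) ∂P
      = ∫ ω, ‖‖f ω‖ ^ (2:ℝ)‖ * ‖‖g ω‖ ^ (2:ℝ)‖ ∂P :=
        integral_congr_ae (Eventually.of_forall fun ω => e2 _ _)
    _ ≤ (∫ ω, ‖‖f ω‖ ^ (2:ℝ)‖ ^ (2:ℝ) ∂P) ^ ((1:ℝ)/2)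
        * (∫ ω, ‖‖g ω‖ ^ (2:ℝ)‖ ^ (2:ℝ) ∂P) ^ ((1:ℝ)/2) := key
    _ = (∫ ω, |f ω| ^ (4:ℕ) ∂P) ^ ((1:ℝ)/2) * (∫ ω, |g ω| ^ (4:ℕ) ∂P) ^ ((1:ℝ)/2) := by
        congr 1 <;> · congr 1
                      exact integral_congr_ae (Eventually.of_forall fun ω => e4 _)

private theorem ogi_integral_abs_le_sqrt {S : Ω → ℝ} (hS : MemLp S 2 P) :
    ∫ ω, |S ω| ∂P ≤ Real.sqrt (∫ ω, S ω ^ (2:ℕ) ∂P) := by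
  have h1 : MemLp S (ENNReal.ofReal 2) P := by simpa [ENNReal.ofReal_ofNat] using hS
  have hone : MemLp (fun _ : Ω => (1:ℝ)) (ENNReal.ofReal 2) P := memLp_const 1
  have key := integral_mul_norm_le_Lp_mul_Lq (μ := P)
    (Real.holderConjugate_iff.mpr ⟨one_lt_two, by norm_num⟩) h1 hone
  have e1 : ∫ ω, ‖S ω‖ * ‖(1:ℝ)‖ ∂P = ∫ ω, |S ω| ∂P := by simp
  have e2 : ∫ ω, ‖S ω‖ ^ (2:ℝ) ∂P = ∫ ω, S ω ^ (2:ℕ) ∂P :=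
    integral_congr_ae (Eventually.of_forall fun ω => ogi_rpow_two_eq _)
  have e3 : (∫ ω, ‖(1:ℝ)‖ ^ (2:ℝ) ∂P) ^ ((1:ℝ)/2) = 1 := by simp
  rw [e1, e2, e3] at key
  rw [mul_one] at key
  refine key.trans (le_of_eq ?_)
  rw [Real.sqrt_eq_rpow]

private theorem ogi_abs_integral_mul4 {f1 f2 f3 f4 : Ω → ℝ} (h1 : MemLp f1 4 P)
    (h2 : MemLp f2 4 P) (h3 : MemLp f3 4 P) (h4 : MemLp f4 4 P) :
    |∫ ω, f1 ω * f2 ω * (f3 ω * f4 ω) ∂P|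
      ≤ (∫ ω, |f1 ω| ^ (4:ℕ) ∂P) ^ ((1:ℝ)/4) * (∫ ω, |f2 ω| ^ (4:ℕ) ∂P) ^ ((1:ℝ)/4)
        * ((∫ ω, |f3 ω| ^ (4:ℕ) ∂P) ^ ((1:ℝ)/4) * (∫ ω, |f4 ω| ^ (4:ℕ) ∂P) ^ ((1:ℝ)/4)) := by
  have h12 : MemLp (f1 * f2) (ENNReal.ofReal 2) P := by
    simpa [ENNReal.ofReal_ofNat] using ogi_memℒp_mul h1 h2
  have h34 : MemLp (f3 * f4) (ENNReal.ofReal 2) P := by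
    simpa [ENNReal.ofReal_ofNat] using ogi_memℒp_mul h3 h4
  have key := integral_mul_norm_le_Lp_mul_Lq (μ := P)
    (Real.holderConjugate_iff.mpr ⟨one_lt_two, by norm_num⟩) h12 h34
  have habs : |∫ ω, f1 ω * f2 ω * (f3 ω * f4 ω) ∂P|
      ≤ ∫ a, ‖(f1 * f2) a‖ * ‖(f3 * f4) a‖ ∂P := by
    rw [← Real.norm_eq_abs]
    refine (norm_integral_le_integral_norm _).trans (le_of_eq ?_)
    refine integral_congr_ae (Eventually.of_forall fun ω => ?_)
    simp [abs_mul]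
  refine habs.trans (key.trans ?_)
  have nn4 : ∀ h : Ω → ℝ, (0:ℝ) ≤ ∫ ω, |h ω| ^ (4:ℕ) ∂P := fun h =>
    integral_nonneg fun ω => by positivity
  have step : ∀ (u v : Ω → ℝ), MemLp u 4 P → MemLp v 4 P →
      (∫ a, ‖(u * v) a‖ ^ (2:ℝ) ∂P) ^ ((1:ℝ)/2)
        ≤ (∫ ω, |u ω| ^ (4:ℕ) ∂P) ^ ((1:ℝ)/4) * (∫ ω, |v ω| ^ (4:ℕ) ∂P) ^ ((1:ℝ)/4) := by
    intro u v hu hv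
    have hle := ogi_sq_int_mul_le hu hv
    have h0 : (0:ℝ) ≤ ∫ a, ‖(u * v) a‖ ^ (2:ℝ) ∂P :=
      integral_nonneg fun ω => Real.rpow_nonneg (norm_nonneg _) _
    calc (∫ a, ‖(u * v) a‖ ^ (2:ℝ) ∂P) ^ ((1:ℝ)/2)
        ≤ ((∫ ω, |u ω| ^ (4:ℕ) ∂P) ^ ((1:ℝ)/2)
            * (∫ ω, |v ω| ^ (4:ℕ) ∂P) ^ ((1:ℝ)/2)) ^ ((1:ℝ)/2) :=
          Real.rpow_le_rpow h0 (by simpa [Pi.mul_apply] using hle) (by norm_num)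
      _ = (∫ ω, |u ω| ^ (4:ℕ) ∂P) ^ ((1:ℝ)/4) * (∫ ω, |v ω| ^ (4:ℕ) ∂P) ^ ((1:ℝ)/4) := by
          rw [Real.mul_rpow (Real.rpow_nonneg (nn4 u) _) (Real.rpow_nonneg (nn4 v) _),
            ← Real.rpow_mul (nn4 u), ← Real.rpow_mul (nn4 v)]
          norm_num
  have s1 := step f1 f2 h1 h2
  have s2 := step f3 f4 h3 h4
  have p2 : (0:ℝ) ≤ (∫ a, ‖(f3 * f4) a‖ ^ (2:ℝ) ∂P) ^ ((1:ℝ)/2) := Real.rpow_nonneg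
    (integral_nonneg fun ω => Real.rpow_nonneg (norm_nonneg _) _) _
  exact mul_le_mul s1 s2 p2 (by positivity)

private theorem ogi_integral_mul_eq_zero {𝒢 : MeasurableSpace Ω} (h𝒢 : 𝒢 ≤ m0) {f d : Ω → ℝ}
    (hf : StronglyMeasurable[𝒢] f) (hfd : Integrable (f * d) P) (hd : Integrable d P)
    (hcond : P[d|𝒢] =ᵐ[P] 0) : ∫ ω, f ω * d ω ∂P = 0 := by
  haveI : SigmaFinite (P.trim h𝒢) := by infer_instance
  have h1 : ∫ ω, (f * d) ω ∂P = ∫ ω, (P[f * d|𝒢]) ω ∂P :=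
    (integral_condExp h𝒢 (f := f * d)).symm
  have h2 : P[f * d|𝒢] =ᵐ[P] f * P[d|𝒢] := condExp_mul_of_stronglyMeasurable_left hf hfd hd
  have h3 : P[f * d|𝒢] =ᵐ[P] 0 := by
    filter_upwards [h2, hcond] with ω hω₂ hωc
    simp [hω₂, Pi.mul_apply, hωc]
  calc ∫ ω, f ω * d ω ∂P = ∫ ω, (P[f * d|𝒢]) ω ∂P := h1
    _ = ∫ ω, (0:Ω → ℝ) ω ∂P := integral_congr_ae h3
    _ = 0 := by simp

private theorem ogi_condexp_increment_zero (L : ℕ) (ℱ : ℕ → MeasurableSpace Ω) (Y : ℕ → Ω → ℝ)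
    (hint : ∀ k ∈ Finset.Icc 1 L, Integrable (Y k) P)
    (hmart : ∀ m l : ℕ, m ≤ l → l ≤ L →
      P[(fun ω => ∑ k ∈ Finset.Icc 1 l, Y k ω) | ℱ m]
        =ᵐ[P] (fun ω => ∑ k ∈ Finset.Icc 1 m, Y k ω))
    (t n : ℕ) (ht : t ≤ n) (hn : n + 1 ≤ L) :
    P[Y (n+1) | ℱ t] =ᵐ[P] 0 := by
  have hintS : ∀ l, l ≤ L → Integrable (fun ω => ∑ k ∈ Finset.Icc 1 l, Y k ω) P := by
    intro l hl
    exact integrable_finset_sum _ fun k hk => hint k (Finset.mem_Icc.mpr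
      ⟨(Finset.mem_Icc.mp hk).1, le_trans (Finset.mem_Icc.mp hk).2 hl⟩)
  have h1 := hmart t (n+1) (by omega) hn
  have h2 := hmart t n ht (by omega)
  have hY : Y (n+1) = (fun ω => ∑ k ∈ Finset.Icc 1 (n+1), Y k ω)
      - (fun ω => ∑ k ∈ Finset.Icc 1 n, Y k ω) := by
    funext ω
    simp only [Pi.sub_apply]
    rw [Finset.sum_Icc_succ_top (by omega : 1 ≤ n + 1)]
    ring
  rw [hY]
  have := condExp_sub (μ := P) (m := ℱ t) (hintS (n+1) hn) (hintS n (by omega))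
  refine this.trans ?_
  filter_upwards [h1, h2] with ω hω₁ hω₂
  simp [hω₁, hω₂]

private theorem ogi_sm_increment (L : ℕ) (ℱ : ℕ → MeasurableSpace Ω) (Y : ℕ → Ω → ℝ)
    (hℱ_mono : ∀ m l, m ≤ l → l ≤ L → ℱ m ≤ ℱ l)
    (hadp : ∀ l, l ≤ L → StronglyMeasurable[ℱ l] (fun ω => ∑ k ∈ Finset.Icc 1 l, Y k ω))
    (n : ℕ) (hn : n + 1 ≤ L) : StronglyMeasurable[ℱ (n+1)] (Y (n+1)) := by
  have hY : Y (n+1) = fun ω => (∑ k ∈ Finset.Icc 1 (n+1), Y k ω)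
      - (∑ k ∈ Finset.Icc 1 n, Y k ω) := by
    funext ω
    rw [Finset.sum_Icc_succ_top (by omega : 1 ≤ n + 1)]
    ring
  rw [hY]
  exact (hadp (n+1) hn).sub ((hadp n (by omega)).mono (hℱ_mono n (n+1) (by omega) hn))

private theorem ogi_fiber_card_le (g : ℕ) (B : Finset (ℕ × ℕ))
    (hB : ∀ p ∈ B, p.2 ≤ p.1 + g ∧ p.1 ≤ p.2 + g) (y : ℕ × ℕ) :
    (((B ×ˢ B).filter (fun q : (ℕ × ℕ) × ℕ × ℕ => (q.1.2, q.2.2) = y)).card)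
      ≤ (2*g+1)^2 := by
  have hcard : (((B ×ˢ B).filter (fun q : (ℕ × ℕ) × ℕ × ℕ => (q.1.2, q.2.2) = y)).card)
      ≤ ((Finset.Icc (y.1 - g) (y.1 + g)) ×ˢ (Finset.Icc (y.2 - g) (y.2 + g))).card := by
    apply Finset.card_le_card_of_injOn (fun q => (q.1.1, q.2.1))
    · intro q hq
      simp only [Finset.mem_coe, Finset.mem_filter, Finset.mem_product] at hq
      obtain ⟨⟨hq1, hq2⟩, hy⟩ := hq
      obtain ⟨hy1, hy2⟩ := Prod.mk.injEq _ _ _ _ ▸ hy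
      have h1 := hB _ hq1
      have h2 := hB _ hq2
      simp only [Finset.mem_coe, Finset.mem_product, Finset.mem_Icc]
      omega
    · intro q1 h1 q2 h2 heq
      simp only [coe_filter, Set.mem_setOf_eq] at h1 h2
      obtain ⟨-, hy1⟩ := h1
      obtain ⟨-, hy2⟩ := h2
      obtain ⟨e1, e2⟩ := Prod.mk.injEq _ _ _ _ ▸ heq
      obtain ⟨f1, f2⟩ := Prod.mk.injEq _ _ _ _ ▸ hy1
      obtain ⟨f3, f4⟩ := Prod.mk.injEq _ _ _ _ ▸ hy2
      have : q1.1 = q2.1 := Prod.ext e1 (f1.trans f3.symm)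
      have : q1.2 = q2.2 := Prod.ext e2 (f2.trans f4.symm)
      exact Prod.ext ‹q1.1 = q2.1› ‹q1.2 = q2.2›
  refine hcard.trans ?_
  rw [Finset.card_product, Nat.card_Icc, Nat.card_Icc]
  have : y.1 + g + 1 - (y.1 - g) ≤ 2*g+1 := by omega
  have : y.2 + g + 1 - (y.2 - g) ≤ 2*g+1 := by omega
  calc (y.1 + g + 1 - (y.1 - g)) * (y.2 + g + 1 - (y.2 - g)) ≤ (2*g+1) * (2*g+1) :=
        Nat.mul_le_mul ‹_› ‹_›
    _ = (2*g+1)^2 := (sq _).symm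

end OgiharaAux

set_option maxHeartbeats 1600000 in
/-- Lemma A.1.2 (Ogihara, LAMN for nonsynchronously observed diffusions):
an `L¹` bound for `∑_k X¹_k ∑_{0<|k'-k|≤g} X²_{k,k'}` when the partial sums of
`X¹` and of each row of `X²` are martingales, in terms of `L⁴` bounds. -/
theorem martingale_product_L1_bound_two_index
    {Ω : Type*} [m0 : MeasurableSpace Ω] (P : Measure Ω) [IsProbabilityMeasure P]
    (L g : ℕ) (hg : 1 ≤ g) (ℱ : ℕ → MeasurableSpace Ω)
    (hℱ_le : ∀ l, l ≤ L → ℱ l ≤ m0)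
    (hℱ_mono : ∀ m l, m ≤ l → l ≤ L → ℱ m ≤ ℱ l)
    (X1 : ℕ → Ω → ℝ) (X2 : ℕ → ℕ → Ω → ℝ) (C1 : ℝ) (C2 : ℕ → ℝ)
    (hC1_pos : 0 < C1) (hC2_pos : ∀ k ∈ Finset.Icc 1 L, 0 < C2 k)
    (hadp1 : ∀ l, l ≤ L → StronglyMeasurable[ℱ l] (fun ω => ∑ k ∈ Finset.Icc 1 l, X1 k ω))
    (hint1 : ∀ k ∈ Finset.Icc 1 L, Integrable (X1 k) P)
    (hmart1 : ∀ m l : ℕ, m ≤ l → l ≤ L →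
      P[(fun ω => ∑ k ∈ Finset.Icc 1 l, X1 k ω) | ℱ m]
        =ᵐ[P] (fun ω => ∑ k ∈ Finset.Icc 1 m, X1 k ω))
    (hadp2 : ∀ k ∈ Finset.Icc 1 L, ∀ l, l ≤ L →
      StronglyMeasurable[ℱ l] (fun ω => ∑ k' ∈ Finset.Icc 1 l, X2 k k' ω))
    (hint2 : ∀ k ∈ Finset.Icc 1 L, ∀ k' ∈ Finset.Icc 1 L, Integrable (X2 k k') P)
    (hmart2 : ∀ k ∈ Finset.Icc 1 L, ∀ m l : ℕ, m ≤ l → l ≤ L →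
      P[(fun ω => ∑ k' ∈ Finset.Icc 1 l, X2 k k' ω) | ℱ m]
        =ᵐ[P] (fun ω => ∑ k' ∈ Finset.Icc 1 m, X2 k k' ω))
    (hLp1 : ∀ k ∈ Finset.Icc 1 L, MemLp (X1 k) 4 P)
    (hLp2 : ∀ k ∈ Finset.Icc 1 L, ∀ k' ∈ Finset.Icc 1 L, MemLp (X2 k k') 4 P)
    (hmom1 : ∀ k ∈ Finset.Icc 1 L, (∫ ω, |X1 k ω| ^ 4 ∂P) ^ ((1 : ℝ) / 4) ≤ C1)
    (hmom2 : ∀ k ∈ Finset.Icc 1 L, ∀ k' ∈ Finset.Icc 1 L,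
      (∫ ω, |X2 k k' ω| ^ 4 ∂P) ^ ((1 : ℝ) / 4) ≤ C2 k') :
    ∫ ω, |∑ k ∈ Finset.Icc 1 L, X1 k ω *
        ∑ k' ∈ (Finset.Icc 1 L).filter (fun k' => k' ≠ k ∧ k' ≤ k + g ∧ k ≤ k' + g),
          X2 k k' ω| ∂P
      ≤ 2 * (2 * (g : ℝ) + 1) * C1 *
          Real.sqrt (∑ l₁ ∈ Finset.Icc 1 L,
            ∑ l₂ ∈ (Finset.Icc 1 L).filter (fun l₂ => l₂ ≤ l₁ + 2 * g ∧ l₁ ≤ l₂ + 2 * g),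
              C2 l₁ * C2 l₂) := by
  classical
  set I : Finset ℕ := Finset.Icc 1 L with hIdef
  set B : Finset (ℕ × ℕ) :=
    (I ×ˢ I).filter (fun p : ℕ × ℕ => p.2 ≠ p.1 ∧ p.2 ≤ p.1 + g ∧ p.1 ≤ p.2 + g) with hBdef
  set Z : ℕ × ℕ → Ω → ℝ := fun p ω => X1 p.1 ω * X2 p.1 p.2 ω with hZdef
  set S : Ω → ℝ := fun ω => ∑ p ∈ B, Z p ω with hSdef
  -- membership unpacking
  have hBmem : ∀ p ∈ B, p.1 ∈ I ∧ p.2 ∈ I ∧ p.2 ≠ p.1 ∧ p.2 ≤ p.1 + g ∧ p.1 ≤ p.2 + g := by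
    intro p hp
    rw [hBdef, Finset.mem_filter, Finset.mem_product] at hp
    tauto
  have hIL : ∀ k ∈ I, 1 ≤ k ∧ k ≤ L := fun k hk => Finset.mem_Icc.mp hk
  -- strong measurability of increments
  have hX1sm : ∀ k ∈ I, StronglyMeasurable[ℱ k] (X1 k) := by
    intro k hk
    obtain ⟨hk1, hkL⟩ := hIL k hk
    obtain ⟨n, rfl⟩ : ∃ n, k = n + 1 := ⟨k - 1, by omega⟩
    exact ogi_sm_increment L ℱ X1 hℱ_mono hadp1 n hkL
  have hX2sm : ∀ k ∈ I, ∀ k' ∈ I, StronglyMeasurable[ℱ k'] (X2 k k') := by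
    intro k hk k' hk'
    obtain ⟨h1, hL⟩ := hIL k' hk'
    obtain ⟨n, rfl⟩ : ∃ n, k' = n + 1 := ⟨k' - 1, by omega⟩
    exact ogi_sm_increment L ℱ (X2 k) hℱ_mono (hadp2 k hk) n hL
  -- MemLp facts
  have hZmem : ∀ p ∈ B, MemLp (Z p) 2 P := by
    intro p hp
    obtain ⟨h1, h2, -, -, -⟩ := hBmem p hp
    exact ogi_memℒp_mul (hLp1 _ h1) (hLp2 _ h1 _ h2)
  have hSmem : MemLp S 2 P := memLp_finset_sum B (fun p hp => hZmem p hp)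
  have hTint : ∀ p₁ ∈ B, ∀ p₂ ∈ B, Integrable (fun ω => Z p₁ ω * Z p₂ ω) P := by
    intro p₁ h₁ p₂ h₂
    exact ogi_integrable_mul (hZmem p₁ h₁) (hZmem p₂ h₂)
  set T : ℕ × ℕ → ℕ × ℕ → ℝ := fun p₁ p₂ => ∫ ω, Z p₁ ω * Z p₂ ω ∂P with hTdef
  -- conditional expectations of increments vanish
  have hcond1 : ∀ c ∈ I, ∀ t, t + 1 ≤ c → P[X1 c | ℱ t] =ᵐ[P] 0 := by
    intro c hc t ht
    obtain ⟨h1, hL⟩ := hIL c hc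
    obtain ⟨n, rfl⟩ : ∃ n, c = n + 1 := ⟨c - 1, by omega⟩
    exact ogi_condexp_increment_zero L ℱ X1 hint1 hmart1 t n (by omega) hL
  have hcond2 : ∀ c ∈ I, ∀ d ∈ I, ∀ t, t + 1 ≤ d → P[X2 c d | ℱ t] =ᵐ[P] 0 := by
    intro c hc d hd t ht
    obtain ⟨h1, hL⟩ := hIL d hd
    obtain ⟨n, rfl⟩ : ∃ n, d = n + 1 := ⟨d - 1, by omega⟩
    exact ogi_condexp_increment_zero L ℱ (X2 c) (hint2 c hc) (hmart2 c hc) t n (by omega) hL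
  -- vanishing of far-apart terms
  have hvan : ∀ p₁ ∈ B, ∀ p₂ ∈ B, p₁.2 + 2*g < p₂.2 → T p₁ p₂ = 0 := by
    intro p₁ hp₁ p₂ hp₂ hfar
    obtain ⟨ha, hb, hba, hb1, hb2⟩ := hBmem p₁ hp₁
    obtain ⟨hc, hd, hdc, hd1, hd2⟩ := hBmem p₂ hp₂
    obtain ⟨ha1, haL⟩ := hIL _ ha
    obtain ⟨hb1', hbL⟩ := hIL _ hb
    obtain ⟨hc1, hcL⟩ := hIL _ hc
    obtain ⟨hd1', hdL⟩ := hIL _ hd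
    rcases Nat.lt_or_ge p₂.1 p₂.2 with hcd | hcd
    · -- c < d : use martingale increment X2 c d at time d, condition on ℱ (d-1)
      set t := p₂.2 - 1 with htdef
      have htL : t ≤ L := by omega
      have hfsm : StronglyMeasurable[ℱ t]
          (fun ω => X1 p₁.1 ω * X2 p₁.1 p₁.2 ω * X1 p₂.1 ω) := by
        have s1 := (hX1sm _ ha).mono (hℱ_mono _ t (by omega) htL)
        have s2 := (hX2sm _ ha _ hb).mono (hℱ_mono _ t (by omega) htL)
        have s3 := (hX1sm _ hc).mono (hℱ_mono _ t (by omega) htL)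
        exact (s1.mul s2).mul s3
      have hprod : Integrable
          ((fun ω => X1 p₁.1 ω * X2 p₁.1 p₁.2 ω * X1 p₂.1 ω) * X2 p₂.1 p₂.2) P := by
        refine (hTint p₁ hp₁ p₂ hp₂).congr (Eventually.of_forall fun ω => ?_)
        simp only [hZdef, Pi.mul_apply]
        ring
      have hcnd := hcond2 _ hc _ hd t (by omega)
      have key := ogi_integral_mul_eq_zero (hℱ_le t htL) hfsm hprod (hint2 _ hc _ hd) hcnd
      calc T p₁ p₂
          = ∫ ω, (fun ω => X1 p₁.1 ω * X2 p₁.1 p₁.2 ω * X1 p₂.1 ω) ω * X2 p₂.1 p₂.2 ω ∂P :=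
            integral_congr_ae (Eventually.of_forall fun ω => by simp only [hZdef]; ring)
        _ = 0 := key
    · -- d < c (d ≠ c) : use martingale increment X1 c at time c
      have hdc' : p₂.2 < p₂.1 := by omega
      set t := p₂.1 - 1 with htdef
      have htL : t ≤ L := by omega
      have hfsm : StronglyMeasurable[ℱ t]
          (fun ω => X1 p₁.1 ω * X2 p₁.1 p₁.2 ω * X2 p₂.1 p₂.2 ω) := by
        have s1 := (hX1sm _ ha).mono (hℱ_mono _ t (by omega) htL)
        have s2 := (hX2sm _ ha _ hb).mono (hℱ_mono _ t (by omega) htL)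
        have s3 := (hX2sm _ hc _ hd).mono (hℱ_mono _ t (by omega) htL)
        exact (s1.mul s2).mul s3
      have hprod : Integrable
          ((fun ω => X1 p₁.1 ω * X2 p₁.1 p₁.2 ω * X2 p₂.1 p₂.2 ω) * X1 p₂.1) P := by
        refine (hTint p₁ hp₁ p₂ hp₂).congr (Eventually.of_forall fun ω => ?_)
        simp only [hZdef, Pi.mul_apply]
        ring
      have hcnd := hcond1 _ hc t (by omega)
      have key := ogi_integral_mul_eq_zero (hℱ_le t htL) hfsm hprod (hint1 _ hc) hcnd
      calc T p₁ p₂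
          = ∫ ω, (fun ω => X1 p₁.1 ω * X2 p₁.1 p₁.2 ω * X2 p₂.1 p₂.2 ω) ω * X1 p₂.1 ω ∂P :=
            integral_congr_ae (Eventually.of_forall fun ω => by simp only [hZdef]; ring)
        _ = 0 := key
  have hsymm : ∀ p₁ p₂, T p₁ p₂ = T p₂ p₁ := by
    intro p₁ p₂
    exact integral_congr_ae (Eventually.of_forall fun ω => mul_comm _ _)
  -- the term bound
  set F : ℕ × ℕ → ℝ := fun y =>
    if y.2 ≤ y.1 + 2*g ∧ y.1 ≤ y.2 + 2*g then C1^2 * (C2 y.1 * C2 y.2) else 0 with hFdef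
  have hTle : ∀ p₁ ∈ B, ∀ p₂ ∈ B, T p₁ p₂ ≤ F (p₁.2, p₂.2) := by
    intro p₁ hp₁ p₂ hp₂
    obtain ⟨ha, hb, hba, hb1, hb2⟩ := hBmem p₁ hp₁
    obtain ⟨hc, hd, hdc, hd1, hd2⟩ := hBmem p₂ hp₂
    by_cases hw : p₂.2 ≤ p₁.2 + 2*g ∧ p₁.2 ≤ p₂.2 + 2*g
    · simp only [hFdef]
      rw [if_pos hw]
      have h4 := ogi_abs_integral_mul4 (P := P) (hLp1 _ ha) (hLp2 _ ha _ hb)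
        (hLp1 _ hc) (hLp2 _ hc _ hd)
      have hTabs : |T p₁ p₂| ≤ (∫ ω, |X1 p₁.1 ω| ^ (4:ℕ) ∂P) ^ ((1:ℝ)/4)
          * (∫ ω, |X2 p₁.1 p₁.2 ω| ^ (4:ℕ) ∂P) ^ ((1:ℝ)/4)
          * ((∫ ω, |X1 p₂.1 ω| ^ (4:ℕ) ∂P) ^ ((1:ℝ)/4)
            * (∫ ω, |X2 p₂.1 p₂.2 ω| ^ (4:ℕ) ∂P) ^ ((1:ℝ)/4)) := h4
      have nn : ∀ h : Ω → ℝ, (0:ℝ) ≤ (∫ ω, |h ω| ^ (4:ℕ) ∂P) ^ ((1:ℝ)/4) := fun h =>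
        Real.rpow_nonneg (integral_nonneg fun ω => by positivity) _
      have m1 := hmom1 _ ha
      have m2 := hmom2 _ ha _ hb
      have m3 := hmom1 _ hc
      have m4 := hmom2 _ hc _ hd
      have hC2b := hC2_pos _ hb
      have hC2d := hC2_pos _ hd
      have step1 : (∫ ω, |X1 p₁.1 ω| ^ (4:ℕ) ∂P) ^ ((1:ℝ)/4)
          * (∫ ω, |X2 p₁.1 p₁.2 ω| ^ (4:ℕ) ∂P) ^ ((1:ℝ)/4) ≤ C1 * C2 p₁.2 :=
        mul_le_mul m1 m2 (nn _) hC1_pos.le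
      have step2 : (∫ ω, |X1 p₂.1 ω| ^ (4:ℕ) ∂P) ^ ((1:ℝ)/4)
          * (∫ ω, |X2 p₂.1 p₂.2 ω| ^ (4:ℕ) ∂P) ^ ((1:ℝ)/4) ≤ C1 * C2 p₂.2 :=
        mul_le_mul m3 m4 (nn _) hC1_pos.le
      have hfinal : |T p₁ p₂| ≤ (C1 * C2 p₁.2) * (C1 * C2 p₂.2) :=
        hTabs.trans (mul_le_mul step1 step2 (mul_nonneg (nn _) (nn _)) (by positivity))
      calc T p₁ p₂ ≤ |T p₁ p₂| := le_abs_self _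
        _ ≤ (C1 * C2 p₁.2) * (C1 * C2 p₂.2) := hfinal
        _ = C1^2 * (C2 p₁.2 * C2 p₂.2) := by ring
    · simp only [hFdef]
      rw [if_neg hw]
      rcases not_and_or.mp hw with h | h
      · exact le_of_eq (hvan p₁ hp₁ p₂ hp₂ (by omega))
      · rw [hsymm]
        exact le_of_eq (hvan p₂ hp₂ p₁ hp₁ (by omega))
  -- expansion of the second moment
  have hSsq : ∫ ω, S ω ^ (2:ℕ) ∂P = ∑ p₁ ∈ B, ∑ p₂ ∈ B, T p₁ p₂ := by
    have hpt : ∀ ω, S ω ^ (2:ℕ) = ∑ p₁ ∈ B, ∑ p₂ ∈ B, Z p₁ ω * Z p₂ ω := by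
      intro ω
      simp only [hSdef]
      rw [sq, Finset.sum_mul_sum]
    rw [integral_congr_ae (Eventually.of_forall hpt)]
    rw [integral_finset_sum _ (fun p₁ hp₁ =>
      integrable_finset_sum _ (fun p₂ hp₂ => hTint p₁ hp₁ p₂ hp₂))]
    exact Finset.sum_congr rfl fun p₁ hp₁ =>
      integral_finset_sum _ fun p₂ hp₂ => hTint p₁ hp₁ p₂ hp₂
  -- counting bound
  set Q : ℝ := ∑ l₁ ∈ I, ∑ l₂ ∈ I.filter (fun l₂ => l₂ ≤ l₁ + 2 * g ∧ l₁ ≤ l₂ + 2 * g),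
      C2 l₁ * C2 l₂ with hQdef
  have hFnonneg : ∀ y ∈ I ×ˢ I, 0 ≤ F y := by
    intro y hy
    rw [Finset.mem_product] at hy
    simp only [hFdef]
    split_ifs
    · have := hC2_pos _ hy.1
      have := hC2_pos _ hy.2
      positivity
    · exact le_refl 0
  have hB2 : ∀ p ∈ B, p.2 ≤ p.1 + g ∧ p.1 ≤ p.2 + g := fun p hp =>
    ⟨(hBmem p hp).2.2.2.1, (hBmem p hp).2.2.2.2⟩
  have hcount : ∑ p₁ ∈ B, ∑ p₂ ∈ B, F (p₁.2, p₂.2)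
      ≤ (((2*g+1)^2 : ℕ) : ℝ) * (C1^2 * Q) := by
    have himg : ((B ×ˢ B).image (fun q : (ℕ×ℕ)×(ℕ×ℕ) => (q.1.2, q.2.2))) ⊆ I ×ˢ I := by
      intro y hy
      simp only [Finset.mem_image] at hy
      obtain ⟨q, hq, rfl⟩ := hy
      rw [Finset.mem_product] at hq ⊢
      exact ⟨(hBmem _ hq.1).2.1, (hBmem _ hq.2).2.1⟩
    have hcomp := Finset.sum_comp (s := B ×ˢ B) (f := F)
      (g := fun q : (ℕ×ℕ)×(ℕ×ℕ) => (q.1.2, q.2.2))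
    calc ∑ p₁ ∈ B, ∑ p₂ ∈ B, F (p₁.2, p₂.2)
        = ∑ q ∈ B ×ˢ B, F (q.1.2, q.2.2) :=
          (Finset.sum_product (s := B) (t := B)
            (f := fun q : (ℕ×ℕ)×(ℕ×ℕ) => F (q.1.2, q.2.2))).symm
      _ = _ := hcomp
      _ ≤ ∑ y ∈ (B ×ˢ B).image (fun q : (ℕ×ℕ)×(ℕ×ℕ) => (q.1.2, q.2.2)),
            (((2*g+1)^2 : ℕ) : ℝ) * F y := by
          refine Finset.sum_le_sum fun y hy => ?_
          have hFy : 0 ≤ F y := hFnonneg y (himg hy)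
          rw [nsmul_eq_mul]
          refine mul_le_mul_of_nonneg_right ?_ hFy
          exact_mod_cast Nat.cast_le.mpr (ogi_fiber_card_le g B hB2 y)
      _ = (((2*g+1)^2 : ℕ) : ℝ)
            * ∑ y ∈ (B ×ˢ B).image (fun q : (ℕ×ℕ)×(ℕ×ℕ) => (q.1.2, q.2.2)), F y := by
          rw [Finset.mul_sum]
      _ ≤ (((2*g+1)^2 : ℕ) : ℝ) * ∑ y ∈ I ×ˢ I, F y := by
          refine mul_le_mul_of_nonneg_left ?_ (by positivity)
          exact Finset.sum_le_sum_of_subset_of_nonneg himg (fun y hy _ => hFnonneg y hy)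
      _ = (((2*g+1)^2 : ℕ) : ℝ) * (C1^2 * Q) := by
          congr 1
          rw [Finset.sum_product, hQdef, Finset.mul_sum]
          refine Finset.sum_congr rfl fun l₁ hl₁ => ?_
          rw [Finset.mul_sum, Finset.sum_filter]
  have hQnonneg : (0:ℝ) ≤ Q := by
    rw [hQdef]
    refine Finset.sum_nonneg fun l₁ hl₁ => Finset.sum_nonneg fun l₂ hl₂ => ?_
    have := hC2_pos _ hl₁
    have := hC2_pos _ (Finset.mem_of_mem_filter _ hl₂)
    positivity
  have hSeq : ∀ ω, (∑ k ∈ I, X1 k ω *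
      ∑ k' ∈ I.filter (fun k' => k' ≠ k ∧ k' ≤ k + g ∧ k ≤ k' + g), X2 k k' ω) = S ω := by
    intro ω
    simp only [hSdef]
    rw [hBdef, Finset.sum_filter, Finset.sum_product]
    refine Finset.sum_congr rfl fun k hk => ?_
    rw [Finset.mul_sum, Finset.sum_filter]
  have hmain : ∫ ω, |S ω| ∂P ≤ Real.sqrt ((((2*g+1)^2 : ℕ):ℝ) * (C1^2 * Q)) := by
    refine (ogi_integral_abs_le_sqrt hSmem).trans (Real.sqrt_le_sqrt ?_)
    rw [hSsq]
    calc ∑ p₁ ∈ B, ∑ p₂ ∈ B, T p₁ p₂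
        ≤ ∑ p₁ ∈ B, ∑ p₂ ∈ B, F (p₁.2, p₂.2) :=
          Finset.sum_le_sum fun p₁ hp₁ => Finset.sum_le_sum fun p₂ hp₂ => hTle p₁ hp₁ p₂ hp₂
      _ ≤ (((2*g+1)^2 : ℕ):ℝ) * (C1^2 * Q) := hcount
  have hLHS : ∫ ω, |∑ k ∈ I, X1 k ω *
        ∑ k' ∈ I.filter (fun k' => k' ≠ k ∧ k' ≤ k + g ∧ k ≤ k' + g), X2 k k' ω| ∂P
      = ∫ ω, |S ω| ∂P :=
    integral_congr_ae (Eventually.of_forall fun ω => congrArg abs (hSeq ω))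
  rw [hLHS]
  refine hmain.trans ?_
  have hcast : (((2*g+1)^2 : ℕ):ℝ) = (2*(g:ℝ)+1)^2 := by push_cast; ring
  rw [hcast, Real.sqrt_mul (by positivity), Real.sqrt_sq (by positivity),
    Real.sqrt_mul (by positivity), Real.sqrt_sq hC1_pos.le]
  have h0 : (0:ℝ) ≤ (2*(g:ℝ)+1) * (C1 * Real.sqrt Q) := by positivity
  nlinarith [Real.sqrt_nonneg Q]
end

section
/- Let A = {A_{ij}}_{i,j=1}^{2} be a 2×2 real symmetric matrix, let V₁ be a 2×2 real symmetric positive definite matrix, let α, β ∈ ℝ, and let v₂ > 0. Then for all x₁, x₂, y₂, w ∈ ℝ: ∫_ℝ (x₁−y₁+α, x₂−y₂+β) A (x₁−y₁+α, x₂−y₂+β)ᵀ φ₂((x₁−y₁, x₂−y₂)ᵀ; V₁) φ₁(y₁−w; v₂) dy₁ = { (W, x₂−y₂+β) A (W, x₂−y₂+β)ᵀ + A₁₁ / ((V₁⁻¹)₁₁ + v₂⁻¹) } · ∫_ℝ φ₂((x₁−y₁, x₂−y₂)ᵀ; V₁) φ₁(y₁−w; v₂) dy₁, where W = ( v₂⁻¹(x₁−w)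 − (V₁⁻¹)₁₂(x₂−y₂) ) / ( (V₁⁻¹)₁₁ + v₂⁻¹ ) + α and (V₁⁻¹)_{ij} denotes the (i,j) entry of the inverse matrix V₁⁻¹. -/
open MeasureTheory Matrix

/-- Density of the centered bivariate Gaussian distribution with covariance
matrix `V`, evaluated at `x ∈ ℝ²`. -/
noncomputable def gaussianDensity2 (V : Matrix (Fin 2) (Fin 2) ℝ) (x : Fin 2 → ℝ) : ℝ :=
  (2 * Real.pi)⁻¹ * (Real.sqrt V.det)⁻¹ * Real.exp (-(x ⬝ᵥ V⁻¹.mulVec x) / 2)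

/-- Density of the centered one-dimensional Gaussian distribution with
variance `v`, evaluated at `y ∈ ℝ`. -/
noncomputable def gaussianDensity1 (v : ℝ) (y : ℝ) : ℝ :=
  (Real.sqrt (2 * Real.pi * v))⁻¹ * Real.exp (-(y ^ 2) / (2 * v))

lemma int_sq_exp {b : ℝ} (hb : 0 < b) :
    Integrable (fun x : ℝ => x ^ 2 * Real.exp (-b * x ^ 2)) := by
  have := integrable_rpow_mul_exp_neg_mul_sq hb (s := 2) (by norm_num)
  have e : ∀ x : ℝ, x ^ (2:ℝ) = x ^ (2:ℕ) := fun x => by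
    rw [show (2:ℝ) = ((2:ℕ):ℝ) by norm_num, Real.rpow_natCast]
  simpa [e] using this

lemma moment1 {b : ℝ} (hb : 0 < b) : ∫ x : ℝ, x * Real.exp (-b * x ^ 2) = 0 := by
  have hd : ∀ x : ℝ, HasDerivAt (fun x : ℝ => -(2*b)⁻¹ * Real.exp (-b * x ^ 2))
      (x * Real.exp (-b * x ^ 2)) x := by
    intro x
    have h1 : HasDerivAt (fun x : ℝ => -b * x ^ 2) (-b * (2*x)) x := by
      simpa using ((hasDerivAt_pow 2 x).const_mul (-b))
    have := (h1.exp).const_mul (-(2*b)⁻¹)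
    refine this.congr_deriv ?_
    have hb0 : b ≠ 0 := hb.ne'
    field_simp
  exact integral_eq_zero_of_hasDerivAt_of_integrable hd
    (integrable_mul_exp_neg_mul_sq hb)
    ((integrable_exp_neg_mul_sq hb).const_mul _)

lemma moment2 {b : ℝ} (hb : 0 < b) :
    ∫ x : ℝ, x ^ 2 * Real.exp (-b * x ^ 2)
      = (2*b)⁻¹ * ∫ x : ℝ, Real.exp (-b * x ^ 2) := by
  have hd : ∀ x : ℝ, HasDerivAt (fun x : ℝ => -(2*b)⁻¹ * (x * Real.exp (-b * x ^ 2)))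
      (x ^ 2 * Real.exp (-b * x ^ 2) - (2*b)⁻¹ * Real.exp (-b * x ^ 2)) x := by
    intro x
    have h1 : HasDerivAt (fun x : ℝ => -b * x ^ 2) (-b * (2*x)) x := by
      simpa using ((hasDerivAt_pow 2 x).const_mul (-b))
    have h2 := ((hasDerivAt_id x).mul h1.exp).const_mul (-(2*b)⁻¹)
    refine h2.congr_deriv ?_
    have hb0 : b ≠ 0 := hb.ne'
    field_simp; simp only [id_eq]; ring
  have hint : Integrable (fun x : ℝ =>
      x ^ 2 * Real.exp (-b * x ^ 2) - (2*b)⁻¹ * Real.exp (-b * x ^ 2)) :=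
    (int_sq_exp hb).sub ((integrable_exp_neg_mul_sq hb).const_mul _)
  have h0 := integral_eq_zero_of_hasDerivAt_of_integrable hd hint
    ((integrable_mul_exp_neg_mul_sq hb).const_mul _)
  rw [integral_sub (int_sq_exp hb) ((integrable_exp_neg_mul_sq hb).const_mul _),
    integral_const_mul _] at h0
  linarith

lemma quad_int (c : ℝ) (hc : 0 < c) (C m p q r : ℝ) :
    ∫ y : ℝ, (p * (y - m) ^ 2 + q * (y - m) + r) * (C * Real.exp (-(c * (y - m) ^ 2) / 2))
      = (r + p / c) * ∫ y : ℝ, C * Real.exp (-(c * (y - m) ^ 2) / 2) := by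
  have hc2 : 0 < c / 2 := by linarith
  have e : ∀ z : ℝ, -(c * z ^ 2) / 2 = -(c/2) * z ^ 2 := fun z => by ring
  rw [integral_sub_right_eq_self
      (fun z => (p * z ^ 2 + q * z + r) * (C * Real.exp (-(c * z ^ 2) / 2))) m,
    integral_sub_right_eq_self (fun z => C * Real.exp (-(c * z ^ 2) / 2)) m]
  simp_rw [e]
  have i0 := integrable_exp_neg_mul_sq hc2
  have i1 := integrable_mul_exp_neg_mul_sq hc2
  have i2 := int_sq_exp hc2
  have expand : (fun z : ℝ => (p * z ^ 2 + q * z + r) * (C * Real.exp (-(c/2) * z ^ 2)))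
      = fun z : ℝ => (C * p) * (z ^ 2 * Real.exp (-(c/2) * z ^ 2))
        + ((C * q) * (z * Real.exp (-(c/2) * z ^ 2))
        + (C * r) * Real.exp (-(c/2) * z ^ 2)) := by
    funext z; ring
  have iA : Integrable (fun z : ℝ => (C * p) * (z ^ 2 * Real.exp (-(c/2) * z ^ 2))) :=
    i2.const_mul _
  have iB1 : Integrable (fun z : ℝ => (C * q) * (z * Real.exp (-(c/2) * z ^ 2))) :=
    i1.const_mul _
  have iB2 : Integrable (fun z : ℝ => (C * r) * Real.exp (-(c/2) * z ^ 2)) :=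
    i0.const_mul _
  have iB : Integrable (fun z : ℝ => (C * q) * (z * Real.exp (-(c/2) * z ^ 2))
      + (C * r) * Real.exp (-(c/2) * z ^ 2)) := iB1.add iB2
  rw [expand, integral_add iA iB, integral_add iB1 iB2,
    integral_const_mul _, integral_const_mul _, integral_const_mul _, integral_const_mul _,
    moment1 hc2, moment2 hc2]
  field_simp
  ring

lemma complete_square (b0 b1 s v x₁ w c m y : ℝ)
    (hc : c = b0 + v⁻¹) (hm : c * m = b0 * x₁ + b1 * s + v⁻¹ * w) :
    b0 * (x₁ - y) ^ 2 + 2 * b1 * (x₁ - y) * s + (y - w) ^ 2 / v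
      = b0 * (x₁ - m) ^ 2 + 2 * b1 * (x₁ - m) * s + (m - w) ^ 2 / v
        + c * (y - m) ^ 2 := by
  linear_combination (-(y - m) * (y + m)) * hc + (2 * (y - m)) * hm

lemma dot_expand (M : Matrix (Fin 2) (Fin 2) ℝ) (a b : ℝ) :
    ![a, b] ⬝ᵥ M.mulVec ![a, b]
      = M 0 0 * a^2 + (M 0 1 + M 1 0) * a * b + M 1 1 * b^2 := by
  simp [Matrix.mulVec, dotProduct, Fin.sum_univ_two]
  ring

/-- Lemma A.2 (Ogihara, LAMN for nonsynchronously observed diffusions):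
an explicit Gaussian integral identity for a quadratic form integrated against
the product of a bivariate and a univariate Gaussian density. -/
theorem gaussian_quadratic_form_integral
    (A V₁ : Matrix (Fin 2) (Fin 2) ℝ) (hA : A.IsSymm) (hV₁ : V₁.PosDef)
    (α β v₂ : ℝ) (hv₂ : 0 < v₂) (x₁ x₂ y₂ w : ℝ) :
    (∫ y₁ : ℝ,
        (![x₁ - y₁ + α, x₂ - y₂ + β] ⬝ᵥ A.mulVec ![x₁ - y₁ + α, x₂ - y₂ + β]) *
          (gaussianDensity2 V₁ ![x₁ - y₁, x₂ - y₂] * gaussianDensity1 v₂ (y₁ - w)))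
      = ((![(v₂⁻¹ * (x₁ - w) - V₁⁻¹ 0 1 * (x₂ - y₂)) / (V₁⁻¹ 0 0 + v₂⁻¹) + α, x₂ - y₂ + β]
            ⬝ᵥ A.mulVec
              ![(v₂⁻¹ * (x₁ - w) - V₁⁻¹ 0 1 * (x₂ - y₂)) / (V₁⁻¹ 0 0 + v₂⁻¹) + α,
                x₂ - y₂ + β]) +
          A 0 0 / (V₁⁻¹ 0 0 + v₂⁻¹)) *
        ∫ y₁ : ℝ, gaussianDensity2 V₁ ![x₁ - y₁, x₂ - y₂] * gaussianDensity1 v₂ (y₁ - w) := by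
  have hBpd : (V₁⁻¹).PosDef := hV₁.inv
  have hb00 : 0 < V₁⁻¹ 0 0 := by
    have h := hBpd.dotProduct_mulVec_pos (x := Pi.single 0 1) (by intro h; simpa using congrFun h 0)
    simpa [Matrix.mulVec, dotProduct, Fin.sum_univ_two, Pi.single_apply] using h
  have hsym : V₁⁻¹ 1 0 = V₁⁻¹ 0 1 := by simpa using hBpd.1.apply 0 1
  have hv : (0:ℝ) < v₂⁻¹ := inv_pos.mpr hv₂
  have hv2ne : v₂ ≠ 0 := ne_of_gt hv₂
  set s := x₂ - y₂ with hs
  set c := V₁⁻¹ 0 0 + v₂⁻¹ with hcdef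
  have hc : 0 < c := by rw [hcdef]; linarith
  have hcne : c ≠ 0 := ne_of_gt hc
  set m := (V₁⁻¹ 0 0 * x₁ + V₁⁻¹ 0 1 * s + v₂⁻¹ * w) / c with hmdef
  set W := (v₂⁻¹ * (x₁ - w) - V₁⁻¹ 0 1 * s) / c + α with hWdef
  set R := V₁⁻¹ 0 0 * (x₁ - m)^2 + 2 * V₁⁻¹ 0 1 * (x₁ - m) * s + V₁⁻¹ 1 1 * s^2
      + (m - w)^2 / v₂ with hRdef
  set C := (2*Real.pi)⁻¹ * (Real.sqrt V₁.det)⁻¹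
      * ((Real.sqrt (2*Real.pi*v₂))⁻¹ * Real.exp (-R/2)) with hCdef
  have hcm : c * m = V₁⁻¹ 0 0 * x₁ + V₁⁻¹ 0 1 * s + v₂⁻¹ * w := by
    rw [hmdef, mul_comm, div_mul_cancel₀ _ hcne]
  have h1 : (x₁ - m) * c = v₂⁻¹ * (x₁ - w) - V₁⁻¹ 0 1 * s := by
    have hmc : m * c = V₁⁻¹ 0 0 * x₁ + V₁⁻¹ 0 1 * s + v₂⁻¹ * w := by
      rw [mul_comm]; exact hcm
    linear_combination x₁ * hcdef - hmc
  have hW : W = x₁ - m + α := by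
    rw [hWdef, ← h1, mul_div_cancel_right₀ _ hcne]
  have hdens : ∀ y₁ : ℝ,
      gaussianDensity2 V₁ ![x₁ - y₁, s] * gaussianDensity1 v₂ (y₁ - w)
        = C * Real.exp (-(c * (y₁ - m) ^ 2) / 2) := by
    intro y₁
    rw [gaussianDensity2, gaussianDensity1, dot_expand]
    have harg : -(V₁⁻¹ 0 0 * (x₁ - y₁)^2 + (V₁⁻¹ 0 1 + V₁⁻¹ 1 0) * (x₁ - y₁) * s
          + V₁⁻¹ 1 1 * s^2)/2 + (-((y₁ - w)^2) / (2*v₂))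
        = -R/2 + -(c * (y₁ - m)^2)/2 := by
      have key := complete_square (V₁⁻¹ 0 0) (V₁⁻¹ 0 1) s v₂ x₁ w c m y₁ hcdef hcm
      rw [hRdef, hsym]
      linear_combination (-1/2 : ℝ) * key
    calc (2*Real.pi)⁻¹ * (Real.sqrt V₁.det)⁻¹
          * Real.exp (-(V₁⁻¹ 0 0 * (x₁ - y₁)^2 + (V₁⁻¹ 0 1 + V₁⁻¹ 1 0) * (x₁ - y₁) * s
              + V₁⁻¹ 1 1 * s^2)/2)
          * ((Real.sqrt (2*Real.pi*v₂))⁻¹ * Real.exp (-((y₁ - w)^2) / (2*v₂)))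
        = ((2*Real.pi)⁻¹ * (Real.sqrt V₁.det)⁻¹ * (Real.sqrt (2*Real.pi*v₂))⁻¹)
          * (Real.exp (-(V₁⁻¹ 0 0 * (x₁ - y₁)^2 + (V₁⁻¹ 0 1 + V₁⁻¹ 1 0) * (x₁ - y₁) * s
              + V₁⁻¹ 1 1 * s^2)/2) * Real.exp (-((y₁ - w)^2) / (2*v₂))) := by ring
      _ = ((2*Real.pi)⁻¹ * (Real.sqrt V₁.det)⁻¹ * (Real.sqrt (2*Real.pi*v₂))⁻¹)
          * Real.exp (-R/2 + -(c * (y₁ - m)^2)/2) := by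
          rw [← Real.exp_add, harg]
      _ = C * Real.exp (-(c * (y₁ - m) ^ 2) / 2) := by
          rw [hCdef, Real.exp_add]; ring
  have hquad : ∀ y₁ : ℝ,
      ![x₁ - y₁ + α, s + β] ⬝ᵥ A.mulVec ![x₁ - y₁ + α, s + β]
        = A 0 0 * (y₁ - m) ^ 2
          + (-(2 * A 0 0 * W + (A 0 1 + A 1 0) * (s + β))) * (y₁ - m)
          + ![W, s + β] ⬝ᵥ A.mulVec ![W, s + β] := by
    intro y₁
    rw [dot_expand, dot_expand, hW]
    ring
  simp_rw [hdens, hquad]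
  exact quad_int c hc C m (A 0 0)
    (-(2 * A 0 0 * W + (A 0 1 + A 1 0) * (s + β)))
    (![W, s + β] ⬝ᵥ A.mulVec ![W, s + β])
end

section
/- Fix T > 0 and a sequence (b_n)_{n∈ℕ} of real numbers with b_n ≥ 1 for all n and b_n → ∞. For each n, on a probability space (Ω, F, P), let ℓ_n be a random positive integer and let S^{n,0}, S^{n,1}, S^{n,2}, … be random variables with S^{n,0} = 0, S^{n,ℓ_n} = T, and S^{n,i-1} < S^{n,i} for all 1 ≤ i ≤ ℓ_n. Define the counting process N^n_t = ∑_{i=1}^{ℓ_n} 1_{{S^{n,i} ≤ t}} for t ∈ [0,T]. Let q > 0 and assume there exists n₀ ∈ ℕ such that sup_{n ≥ n₀} sup_{0 ≤ t ≤ T − b_n^{-1}} E[ ( N^n_{t + b_n^{-1}} − N^n_t )^q ] < ∞. Then for any δ₂ > 3/q and δ₃ > 3/q: lim_{n→∞} b_n² · sup_{j₁, j₂ ∈ ℕ, |j₁ − j₂| ≥ b_n^{δ₂}} P[ ℓ_n ≥ max(j₁, j₂) and |S^{n,j₂} − S^{n,j₁}| / |j₂ − j₁| ≤ b_n^{−1−δ₃}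 ] = 0. -/
open MeasureTheory Filter Set ENNReal

lemma core_pigeonhole
    (T β : ℝ) (hβ1 : 1 ≤ β) (hTβ : β⁻¹ ≤ T)
    (ℓω : ℕ) (Sω : ℕ → ℝ)
    (hS_zero : Sω 0 = 0) (hS_top : Sω ℓω = T)
    (hS_mono : ∀ i, 1 ≤ i → i ≤ ℓω → Sω (i - 1) < Sω i)
    (δ₂ δ₃ : ℝ) (hδ₂ : 0 < δ₂) (hδ₃ : 0 < δ₃)
    (j₁ j₂ : ℕ) (hsep : β ^ δ₂ ≤ |(j₁ : ℝ) - (j₂ : ℝ)|)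
    (hmax : max j₁ j₂ ≤ ℓω)
    (hratio : |Sω j₂ - Sω j₁| / |(j₂ : ℝ) - (j₁ : ℝ)| ≤ β ^ (-1 - δ₃)) :
    ∃ k ≤ ⌈T * β⌉₊, β ^ (min δ₂ δ₃) / 3 ≤
      ((Finset.Icc 1 ℓω).filter
        (fun i => min ((k : ℝ) / β) (T - β⁻¹) < Sω i ∧
          Sω i ≤ min ((k : ℝ) / β) (T - β⁻¹) + β⁻¹)).card := by
  have βpos : (0:ℝ) < β := lt_of_lt_of_le one_pos hβ1
  set m := min j₁ j₂ with hm
  set M := max j₁ j₂ with hM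
  set D := M - m with hD
  have hmM : m ≤ M := min_le_max
  have hDcast : (D : ℝ) = |(j₁ : ℝ) - (j₂ : ℝ)| := by
    rcases le_total j₁ j₂ with h | h
    · rw [hD, hM, hm, max_eq_right h, min_eq_left h, Nat.cast_sub h,
        abs_sub_comm, abs_of_nonneg (by simp [Nat.cast_le.2 h] : (0:ℝ) ≤ (j₂:ℝ) - j₁)]
    · rw [hD, hM, hm, max_eq_left h, min_eq_right h, Nat.cast_sub h,
        abs_of_nonneg (by simp [Nat.cast_le.2 h] : (0:ℝ) ≤ (j₁:ℝ) - j₂)]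
  have hDge : β ^ δ₂ ≤ (D : ℝ) := hDcast ▸ hsep
  have hD1 : (1:ℝ) ≤ (D : ℝ) := le_trans (Real.one_le_rpow hβ1 hδ₂.le) hDge
  have hDpos : (0:ℝ) < (D : ℝ) := lt_of_lt_of_le one_pos hD1
  -- monotonicity of Sω up to ℓω
  have hmono : ∀ i j, i ≤ j → j ≤ ℓω → Sω i ≤ Sω j := by
    intro i j hij hj
    induction j with
    | zero => simp_all
    | succ j ih =>
      rcases Nat.lt_or_ge i (j+1) with h | h
      · have : Sω i ≤ Sω j := ih (by omega) (by omega)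
        have h2 : Sω j < Sω (j+1) := by
          have := hS_mono (j+1) (by omega) hj
          simpa using this
        linarith
      · have : i = j + 1 := by omega
        simp [this]
  have hpos : ∀ i, 1 ≤ i → i ≤ ℓω → 0 < Sω i := by
    intro i h1 h2
    have : Sω 0 ≤ Sω (i-1) := hmono 0 (i-1) (by omega) (by omega)
    have h3 := hS_mono i h1 h2
    rw [hS_zero] at this; linarith
  have hMl : M ≤ ℓω := hmax
  have hST : ∀ i, i ≤ ℓω → Sω i ≤ T := by
    intro i hi
    have := hmono i ℓω hi le_rfl
    rwa [hS_top] at this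
  -- bound on S M - S m
  have habsj : |(j₂:ℝ) - (j₁:ℝ)| = (D:ℝ) := by rw [abs_sub_comm]; exact hDcast.symm
  have habsS : |Sω j₂ - Sω j₁| = Sω M - Sω m := by
    rcases le_total j₁ j₂ with h | h
    · rw [hM, hm, max_eq_right h, min_eq_left h,
        abs_of_nonneg (by linarith [hmono j₁ j₂ h (le_trans (le_max_right j₁ j₂) hmax)])]
    · rw [hM, hm, max_eq_left h, min_eq_right h, abs_sub_comm,
        abs_of_nonneg (by linarith [hmono j₂ j₁ h (le_trans (le_max_left j₁ j₂) hmax)])]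
  have hSMm : Sω M - Sω m ≤ (D : ℝ) * β ^ (-1 - δ₃) := by
    have h0 : (0:ℝ) < |(j₂:ℝ) - (j₁:ℝ)| := by rw [habsj]; exact hDpos
    have h1 := (div_le_iff₀ h0).mp hratio
    rw [habsj, habsS] at h1
    linarith
  -- grid index of each jump
  set kf : ℕ → ℕ := fun i => ⌈Sω i * β⌉₊ - 1 with hkf
  have hceil1 : ∀ i, 1 ≤ i → i ≤ ℓω → 1 ≤ ⌈Sω i * β⌉₊ := fun i h1 h2 =>
    Nat.ceil_pos.mpr (mul_pos (hpos i h1 h2) βpos)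
  have hkcast : ∀ i, 1 ≤ i → i ≤ ℓω → (kf i : ℝ) = (⌈Sω i * β⌉₊ : ℝ) - 1 := by
    intro i h1 h2
    rw [hkf]; push_cast [hceil1 i h1 h2]; ring
  have hklt : ∀ i, 1 ≤ i → i ≤ ℓω → (kf i : ℝ) < Sω i * β := by
    intro i h1 h2
    have hc := Nat.ceil_lt_add_one (mul_pos (hpos i h1 h2) βpos).le
    rw [hkcast i h1 h2]; linarith
  have hkge : ∀ i, 1 ≤ i → i ≤ ℓω → Sω i * β ≤ (kf i : ℝ) + 1 := by
    intro i h1 h2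
    have hc := Nat.le_ceil (Sω i * β)
    rw [hkcast i h1 h2]; linarith
  have hkmono : ∀ i j, 1 ≤ i → i ≤ j → j ≤ ℓω → kf i ≤ kf j := by
    intro i j h1 hij hj
    exact Nat.sub_le_sub_right
      (Nat.ceil_le_ceil (mul_le_mul_of_nonneg_right (hmono i j hij hj) βpos.le)) 1
  have hD1nat : 1 ≤ D := by exact_mod_cast hD1
  set s := Finset.Icc (m+1) M with hs
  have hscard : s.card = D := by rw [hs, Nat.card_Icc]; omega
  set t := Finset.Icc (kf (m+1)) (kf M) with ht
  have hm1l : m + 1 ≤ ℓω := by omega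
  have hmaps : ∀ i ∈ s, kf i ∈ t := by
    intro i hi
    rw [hs, Finset.mem_Icc] at hi
    rw [ht, Finset.mem_Icc]
    exact ⟨hkmono (m+1) i (by omega) hi.1 (by omega), hkmono i M (by omega) hi.2 hMl⟩
  have hββ : β ^ (-1 - δ₃) * β = β ^ (-δ₃) := by
    nth_rewrite 2 [← Real.rpow_one β]
    rw [← Real.rpow_add βpos]; ring_nf
  have htcard : (t.card : ℝ) ≤ (D:ℝ) * β ^ (-δ₃) + 2 := by
    have hkk : kf (m+1) ≤ kf M := hkmono (m+1) M (by omega) (by omega) hMl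
    have h1 : t.card = kf M + 1 - kf (m+1) := Nat.card_Icc _ _
    have h2 : (t.card : ℝ) = (kf M : ℝ) + 1 - (kf (m+1) : ℝ) := by
      rw [h1]; push_cast [Nat.le_succ_of_le hkk]; ring
    have h3 := hklt M (by omega) hMl
    have h4 := hkge (m+1) (by omega) hm1l
    have h5 : Sω m ≤ Sω (m+1) := hmono m (m+1) (by omega) hm1l
    have h6 : (Sω M - Sω m) * β ≤ (D:ℝ) * β ^ (-1-δ₃) * β :=
      mul_le_mul_of_nonneg_right hSMm βpos.le
    rw [mul_assoc, hββ] at h6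
    have h7 := mul_le_mul_of_nonneg_right h5 βpos.le
    linarith
  set r : ℝ := β ^ (min δ₂ δ₃) / 3 with hr
  have hrpos : 0 < r := by rw [hr]; positivity
  have hrkey : r * ((D:ℝ) * β ^ (-δ₃) + 2) ≤ (D:ℝ) := by
    have h1 : β ^ min δ₂ δ₃ ≤ β ^ δ₃ := Real.rpow_le_rpow_of_exponent_le hβ1 (min_le_right _ _)
    have h2 : β ^ min δ₂ δ₃ ≤ (D:ℝ) :=
      le_trans (Real.rpow_le_rpow_of_exponent_le hβ1 (min_le_left _ _)) hDge
    have h3 : β ^ δ₃ * β ^ (-δ₃) = 1 := by rw [← Real.rpow_add βpos]; simp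
    have h4 : (0:ℝ) ≤ β ^ (-δ₃) := (Real.rpow_pos_of_pos βpos _).le
    have h5 : β ^ min δ₂ δ₃ * ((D:ℝ) * β ^ (-δ₃)) ≤ (D:ℝ) := by
      calc β ^ min δ₂ δ₃ * ((D:ℝ) * β ^ (-δ₃)) ≤ β ^ δ₃ * ((D:ℝ) * β ^ (-δ₃)) :=
            mul_le_mul_of_nonneg_right h1 (by positivity)
      _ = (D:ℝ) * (β ^ δ₃ * β ^ (-δ₃)) := by ring
      _ = (D:ℝ) := by rw [h3, mul_one]
    rw [hr]; linarith [h5, h2]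
  set nstar := ⌈r⌉₊ - 1 with hnstar
  have hceilr : 1 ≤ ⌈r⌉₊ := Nat.ceil_pos.mpr hrpos
  have hnstarlt : (nstar : ℝ) < r := by
    have hc := Nat.ceil_lt_add_one hrpos.le
    rw [hnstar]; push_cast [hceilr]; linarith
  have hkeyR : (t.card : ℝ) * (nstar : ℝ) < (D:ℝ) := by
    have h1 : (t.card : ℝ) * (nstar : ℝ) ≤ ((D:ℝ) * β ^ (-δ₃) + 2) * (nstar : ℝ) :=
      mul_le_mul_of_nonneg_right htcard (Nat.cast_nonneg _)
    have hpos2 : (0:ℝ) < (D:ℝ) * β ^ (-δ₃) + 2 := by positivity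
    have h2 : ((D:ℝ) * β ^ (-δ₃) + 2) * (nstar : ℝ) < ((D:ℝ) * β ^ (-δ₃) + 2) * r :=
      mul_lt_mul_of_pos_left hnstarlt hpos2
    linarith
  have hkeyN : t.card * nstar < s.card := by
    rw [hscard]; exact_mod_cast hkeyR
  obtain ⟨y, hyt, hylt⟩ := Finset.exists_lt_card_fiber_of_mul_lt_card_of_maps_to hmaps hkeyN
  have hfib : r ≤ (((s.filter (fun i => kf i = y)).card : ℕ) : ℝ) := by
    have : ⌈r⌉₊ ≤ (s.filter (fun i => kf i = y)).card := by omega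
    exact le_trans (Nat.le_ceil r) (by exact_mod_cast this)
  refine ⟨y, ?_, ?_⟩
  · rw [ht, Finset.mem_Icc] at hyt
    have h1 : kf M ≤ ⌈T * β⌉₊ := by
      have h2 : ⌈Sω M * β⌉₊ ≤ ⌈T * β⌉₊ :=
        Nat.ceil_le_ceil (mul_le_mul_of_nonneg_right (hST M hMl) βpos.le)
      have h3 : kf M = ⌈Sω M * β⌉₊ - 1 := rfl
      omega
    omega
  · refine le_trans hfib ?_
    have hsub : s.filter (fun i => kf i = y) ⊆
        (Finset.Icc 1 ℓω).filter
          (fun i => min ((y : ℝ) / β) (T - β⁻¹) < Sω i ∧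
            Sω i ≤ min ((y : ℝ) / β) (T - β⁻¹) + β⁻¹) := by
      intro i hi
      rw [Finset.mem_filter, hs, Finset.mem_Icc] at hi
      obtain ⟨⟨hi1, hi2⟩, hiy⟩ := hi
      have h1i : 1 ≤ i := by omega
      have hil : i ≤ ℓω := by omega
      rw [Finset.mem_filter, Finset.mem_Icc]
      refine ⟨⟨h1i, hil⟩, ?_, ?_⟩
      · have h1 : min ((y : ℝ) / β) (T - β⁻¹) ≤ (y : ℝ) / β := min_le_left _ _
        have h2 : ((kf i : ℝ)) / β < Sω i := by
          rw [div_lt_iff₀ βpos]; exact hklt i h1i hil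
        rw [← hiy]; exact lt_of_le_of_lt (by rw [hiy] at h2 ⊢; exact h1) h2
      · rcases le_total ((y : ℝ) / β) (T - β⁻¹) with h | h
        · rw [min_eq_left h]
          have h2 : Sω i ≤ ((y : ℝ) + 1) / β := by
            rw [le_div_iff₀ βpos, ← hiy]; exact hkge i h1i hil
          have h3 : ((y : ℝ) + 1) / β = (y : ℝ) / β + β⁻¹ := by
            field_simp
          linarith
        · rw [min_eq_right h]
          have := hST i hil
          linarith
    exact_mod_cast Nat.cast_le.mpr (Finset.card_le_card hsub)

/-- Lemma 2.2 (Ogihara, LAMN for nonsynchronously observed diffusions), for one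
family of observation times: if the `q`-th moments of the increments of the
counting process over intervals of length `bₙ⁻¹` are uniformly bounded, then
condition [A2].2 holds for any `δ₂, δ₃ > 3/q`. -/
theorem observation_times_spread_condition
    {Ω : Type*} [MeasurableSpace Ω] (P : Measure Ω) [IsProbabilityMeasure P]
    (T : ℝ) (hT : 0 < T) (b : ℕ → ℝ) (hb_one : ∀ n, 1 ≤ b n)
    (hb_tendsto : Tendsto b atTop atTop)
    (ℓ : ℕ → Ω → ℕ) (S : ℕ → ℕ → Ω → ℝ)
    (hℓ_meas : ∀ n, Measurable (ℓ n)) (hS_meas : ∀ n i, Measurable (S n i))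
    (hℓ_pos : ∀ n ω, 1 ≤ ℓ n ω)
    (hS_zero : ∀ n ω, S n 0 ω = 0) (hS_top : ∀ n ω, S n (ℓ n ω) ω = T)
    (hS_mono : ∀ n ω i, 1 ≤ i → i ≤ ℓ n ω → S n (i - 1) ω < S n i ω)
    (N : ℕ → ℝ → Ω → ℝ)
    (hN : ∀ n t ω, N n t ω = ∑ i ∈ Finset.Icc 1 (ℓ n ω), if S n i ω ≤ t then (1 : ℝ) else 0)
    (q : ℝ) (hq : 0 < q)
    (hmom : ∃ n₀ : ℕ,
      (⨆ (n : ℕ) (_ : n₀ ≤ n) (t : ℝ) (_ : t ∈ Set.Icc (0 : ℝ) (T - (b n)⁻¹)),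
        ∫⁻ ω, ENNReal.ofReal ((N n (t + (b n)⁻¹) ω - N n t ω) ^ q) ∂P) < ⊤) :
    ∀ δ₂ δ₃ : ℝ, 3 / q < δ₂ → 3 / q < δ₃ →
      Tendsto
        (fun n =>
          ENNReal.ofReal (b n ^ 2) *
            ⨆ (j₁ : ℕ) (j₂ : ℕ) (_ : b n ^ δ₂ ≤ |(j₁ : ℝ) - (j₂ : ℝ)|),
              P {ω | max j₁ j₂ ≤ ℓ n ω ∧
                  |S n j₂ ω - S n j₁ ω| / |(j₂ : ℝ) - (j₁ : ℝ)| ≤ b n ^ (-1 - δ₃)})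
        atTop (nhds 0) := by
  intro δ₂ δ₃ hδ₂ hδ₃
  obtain ⟨n₀, hmomfin⟩ := hmom
  set Mtop := ⨆ (n : ℕ) (_ : n₀ ≤ n) (t : ℝ) (_ : t ∈ Set.Icc (0 : ℝ) (T - (b n)⁻¹)),
        ∫⁻ ω, ENNReal.ofReal ((N n (t + (b n)⁻¹) ω - N n t ω) ^ q) ∂P with hMtop
  have hqdiv : 0 < 3 / q := by positivity
  have hδ₂pos : 0 < δ₂ := lt_trans hqdiv hδ₂
  have hδ₃pos : 0 < δ₃ := lt_trans hqdiv hδ₃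
  set δ : ℝ := min δ₂ δ₃ with hδ
  have hδpos : 0 < δ := lt_min hδ₂pos hδ₃pos
  have hδq : 3 < δ * q := by
    have : 3 / q < δ := lt_min hδ₂ hδ₃
    exact (div_lt_iff₀ hq).mp this
  set C : ℝ := (T + 2) * 3 ^ q with hC
  -- measurability of N
  have hNmeas : ∀ n t, Measurable (N n t) := by
    intro n t
    have hm2 : Measurable (fun p : Ω × ℕ =>
        ∑ i ∈ Finset.Icc 1 p.2, if S n i p.1 ≤ t then (1:ℝ) else 0) :=
      measurable_from_prod_countable_left fun k => by
        show Measurable fun x : Ω => ∑ i ∈ Finset.Icc 1 k, if S n i x ≤ t then (1:ℝ) else 0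
        exact Finset.measurable_sum _ fun i _ =>
          Measurable.ite (measurableSet_le (hS_meas n i) measurable_const)
            measurable_const measurable_const
    have heq : N n t = (fun p : Ω × ℕ =>
        ∑ i ∈ Finset.Icc 1 p.2, if S n i p.1 ≤ t then (1:ℝ) else 0) ∘
          (fun ω => (ω, ℓ n ω)) := by
      funext ω; rw [hN]; rfl
    rw [heq]
    exact hm2.comp (measurable_id.prodMk (hℓ_meas n))
  -- counting identity
  have hcount : ∀ n t (ω : Ω), N n (t + (b n)⁻¹) ω - N n t ω =
      (((Finset.Icc 1 (ℓ n ω)).filter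
        (fun i => t < S n i ω ∧ S n i ω ≤ t + (b n)⁻¹)).card : ℝ) := by
    intro n t ω
    have hinv : (0:ℝ) ≤ (b n)⁻¹ := inv_nonneg.mpr (by linarith [hb_one n])
    rw [hN, hN, ← Finset.sum_sub_distrib]
    rw [show (∑ i ∈ Finset.Icc 1 (ℓ n ω),
        ((if S n i ω ≤ t + (b n)⁻¹ then (1:ℝ) else 0) - (if S n i ω ≤ t then (1:ℝ) else 0)))
      = ∑ i ∈ Finset.Icc 1 (ℓ n ω),
          (if t < S n i ω ∧ S n i ω ≤ t + (b n)⁻¹ then (1:ℝ) else 0) from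
      Finset.sum_congr rfl fun i _ => by
        by_cases h1 : S n i ω ≤ t
        · have h2 : S n i ω ≤ t + (b n)⁻¹ := le_trans h1 (by linarith)
          simp [h1, h2, not_lt.mpr h1]
        · by_cases h2 : S n i ω ≤ t + (b n)⁻¹
          · simp [h1, h2, lt_of_not_ge h1]
          · simp [h1, h2]]
    exact Finset.sum_boole _ _
  -- the dominating sequence
  have hgt : Tendsto (fun n => Mtop * ENNReal.ofReal (C * b n ^ ((3:ℝ) - δ * q)))
      atTop (nhds 0) := by
    have h1 : Tendsto (fun n => b n ^ ((3:ℝ) - δ * q)) atTop (nhds 0) := by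
      have := (tendsto_rpow_neg_atTop (by linarith : 0 < δ * q - 3)).comp hb_tendsto
      simpa [neg_sub, Function.comp_def] using this
    have h2 : Tendsto (fun n => C * b n ^ ((3:ℝ) - δ * q)) atTop (nhds 0) := by
      simpa using h1.const_mul C
    have h3 : Tendsto (fun n => ENNReal.ofReal (C * b n ^ ((3:ℝ) - δ * q))) atTop
        (nhds (ENNReal.ofReal 0)) := (ENNReal.continuous_ofReal.tendsto 0).comp h2
    rw [ENNReal.ofReal_zero] at h3
    have h4 := ENNReal.Tendsto.const_mul h3 (Or.inr hmomfin.ne)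
    simpa using h4
  refine tendsto_of_tendsto_of_tendsto_of_le_of_le' tendsto_const_nhds hgt
    (Eventually.of_forall fun n => zero_le) ?_
  filter_upwards [eventually_ge_atTop n₀, hb_tendsto.eventually_ge_atTop T⁻¹] with n hn₀ hnT
  set β := b n with hβ
  have hβ1 : 1 ≤ β := hb_one n
  have hβpos : (0:ℝ) < β := by linarith
  have hTβ : β⁻¹ ≤ T := by
    rw [inv_le_comm₀ hβpos hT]
    exact hnT
  set r : ℝ := β ^ δ / 3 with hr
  have hrpos : 0 < r := by positivity
  set K : ℕ := ⌈T * β⌉₊ with hK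
  -- Markov bound for each grid point
  have hmarkov : ∀ k : ℕ, P {ω | r ≤ N n (min ((k:ℝ)/β) (T - β⁻¹) + β⁻¹) ω
        - N n (min ((k:ℝ)/β) (T - β⁻¹)) ω} ≤ Mtop / ENNReal.ofReal (r ^ q) := by
    intro k
    set tk : ℝ := min ((k:ℝ)/β) (T - β⁻¹) with htk
    have htmem : tk ∈ Set.Icc (0:ℝ) (T - β⁻¹) :=
      ⟨le_min (by positivity) (by linarith), min_le_right _ _⟩
    have hint : (∫⁻ ω, ENNReal.ofReal ((N n (tk + β⁻¹) ω - N n tk ω) ^ q) ∂P) ≤ Mtop := by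
      rw [hMtop]
      exact le_iSup_of_le n (le_iSup_of_le hn₀ (le_iSup_of_le tk (le_iSup_of_le htmem le_rfl)))
    have hrpowc : Continuous fun x : ℝ => x ^ q :=
      continuous_iff_continuousAt.mpr fun x => Real.continuousAt_rpow_const x q (Or.inr hq.le)
    have hmeasf : AEMeasurable
        (fun ω => ENNReal.ofReal ((N n (tk + β⁻¹) ω - N n tk ω) ^ q)) P :=
      ((hrpowc.measurable.comp
        ((hNmeas n (tk + β⁻¹)).sub (hNmeas n tk))).ennreal_ofReal).aemeasurable
    have hsub : {ω | r ≤ N n (tk + β⁻¹) ω - N n tk ω} ⊆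
        {ω | ENNReal.ofReal (r ^ q) ≤
          ENNReal.ofReal ((N n (tk + β⁻¹) ω - N n tk ω) ^ q)} := by
      intro ω hω
      exact ENNReal.ofReal_le_ofReal (Real.rpow_le_rpow hrpos.le hω hq.le)
    have h2 := mul_meas_ge_le_lintegral₀ hmeasf (ENNReal.ofReal (r ^ q))
    have h3 : ENNReal.ofReal (r ^ q) *
        P {ω | r ≤ N n (tk + β⁻¹) ω - N n tk ω} ≤ Mtop :=
      le_trans (le_trans (mul_le_mul_right (measure_mono hsub) _) h2) hint
    rw [ENNReal.le_div_iff_mul_le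
      (Or.inl (by simp [Real.rpow_pos_of_pos hrpos q, ne_of_gt]))
      (Or.inl ENNReal.ofReal_ne_top)]
    rwa [mul_comm]
  -- the sup over pairs is bounded
  have hsup : (⨆ (j₁ : ℕ) (j₂ : ℕ) (_ : β ^ δ₂ ≤ |(j₁ : ℝ) - (j₂ : ℝ)|),
      P {ω | max j₁ j₂ ≤ ℓ n ω ∧
        |S n j₂ ω - S n j₁ ω| / |(j₂ : ℝ) - (j₁ : ℝ)| ≤ β ^ (-1 - δ₃)}) ≤
      (K + 1 : ℕ) * (Mtop / ENNReal.ofReal (r ^ q)) := by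
    refine iSup_le fun j₁ => iSup_le fun j₂ => iSup_le fun hsep => ?_
    have hcover : {ω | max j₁ j₂ ≤ ℓ n ω ∧
        |S n j₂ ω - S n j₁ ω| / |(j₂ : ℝ) - (j₁ : ℝ)| ≤ β ^ (-1 - δ₃)} ⊆
        ⋃ k ∈ Finset.range (K + 1),
          {ω | r ≤ N n (min ((k:ℝ)/β) (T - β⁻¹) + β⁻¹) ω
            - N n (min ((k:ℝ)/β) (T - β⁻¹)) ω} := by
      rintro ω ⟨hmaxω, hratioω⟩
      obtain ⟨k, hk, hcard⟩ := core_pigeonhole T β hβ1 hTβ (ℓ n ω) (fun i => S n i ω)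
        (hS_zero n ω) (hS_top n ω) (fun i h1 h2 => hS_mono n ω i h1 h2)
        δ₂ δ₃ hδ₂pos hδ₃pos j₁ j₂ hsep hmaxω hratioω
      have hkK : k < K + 1 := by rw [hK]; omega
      refine Set.mem_biUnion (Finset.mem_range.mpr hkK) ?_
      show r ≤ _
      rw [hcount n (min ((k:ℝ)/β) (T - β⁻¹)) ω]
      exact hcard
    calc P _ ≤ P (⋃ k ∈ Finset.range (K + 1),
          {ω | r ≤ N n (min ((k:ℝ)/β) (T - β⁻¹) + β⁻¹) ω
            - N n (min ((k:ℝ)/β) (T - β⁻¹)) ω}) := measure_mono hcover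
      _ ≤ ∑ k ∈ Finset.range (K + 1),
          P {ω | r ≤ N n (min ((k:ℝ)/β) (T - β⁻¹) + β⁻¹) ω
            - N n (min ((k:ℝ)/β) (T - β⁻¹)) ω} := measure_biUnion_finset_le _ _
      _ ≤ ∑ _k ∈ Finset.range (K + 1), (Mtop / ENNReal.ofReal (r ^ q)) :=
          Finset.sum_le_sum fun k _ => hmarkov k
      _ = (K + 1 : ℕ) * (Mtop / ENNReal.ofReal (r ^ q)) := by
          rw [Finset.sum_const, Finset.card_range, nsmul_eq_mul]
  -- final arithmetic
  have hrq : r ^ q = β ^ (δ * q) / 3 ^ q := by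
    rw [hr, Real.div_rpow (Real.rpow_nonneg hβpos.le _) (by norm_num : (0:ℝ) ≤ 3),
      ← Real.rpow_mul hβpos.le]
  have hrqpos : (0:ℝ) < r ^ q := Real.rpow_pos_of_pos hrpos q
  have hKle : ((K + 1 : ℕ) : ℝ≥0∞) ≤ ENNReal.ofReal ((T + 2) * β) := by
    have h2 : (K : ℝ) < T * β + 1 := by
      rw [hK]; exact Nat.ceil_lt_add_one (by positivity)
    have h1 : ((K + 1 : ℕ) : ℝ) ≤ (T + 2) * β := by push_cast; nlinarith
    calc ((K + 1 : ℕ) : ℝ≥0∞) = ENNReal.ofReal ((K + 1 : ℕ) : ℝ) :=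
          (ENNReal.ofReal_natCast _).symm
      _ ≤ ENNReal.ofReal ((T + 2) * β) := ENNReal.ofReal_le_ofReal h1
  have ereal : β ^ 2 * ((T + 2) * β) / r ^ q = C * β ^ ((3:ℝ) - δ * q) := by
    have e1 : β ^ ((3:ℝ) - δ * q) = β ^ (3:ℝ) / β ^ (δ * q) := Real.rpow_sub hβpos _ _
    have e2 : β ^ (3:ℝ) = β ^ 2 * β := by
      rw [show (3:ℝ) = ((3:ℕ):ℝ) by norm_num, Real.rpow_natCast]; ring
    have e3 : (0:ℝ) < β ^ (δ * q) := Real.rpow_pos_of_pos hβpos _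
    have e4 : (0:ℝ) < (3:ℝ) ^ q := Real.rpow_pos_of_pos (by norm_num) q
    rw [hrq, e1, e2, hC]
    field_simp
  calc ENNReal.ofReal (β ^ 2) *
        (⨆ (j₁ : ℕ) (j₂ : ℕ) (_ : β ^ δ₂ ≤ |(j₁ : ℝ) - (j₂ : ℝ)|),
          P {ω | max j₁ j₂ ≤ ℓ n ω ∧
            |S n j₂ ω - S n j₁ ω| / |(j₂ : ℝ) - (j₁ : ℝ)| ≤ β ^ (-1 - δ₃)})
      ≤ ENNReal.ofReal (β ^ 2) * ((K + 1 : ℕ) * (Mtop / ENNReal.ofReal (r ^ q))) :=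
        mul_le_mul_right hsup _
    _ = Mtop * (ENNReal.ofReal (β ^ 2) * ((K + 1 : ℕ) : ℝ≥0∞) / ENNReal.ofReal (r ^ q)) := by
        rw [div_eq_mul_inv, div_eq_mul_inv]; ring
    _ ≤ Mtop * ENNReal.ofReal (C * β ^ ((3:ℝ) - δ * q)) := by
        refine mul_le_mul_right ?_ _
        calc ENNReal.ofReal (β ^ 2) * ((K + 1 : ℕ) : ℝ≥0∞) / ENNReal.ofReal (r ^ q)
            ≤ ENNReal.ofReal (β ^ 2) * ENNReal.ofReal ((T + 2) * β) /
              ENNReal.ofReal (r ^ q) := by gcongr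
          _ = ENNReal.ofReal (β ^ 2 * ((T + 2) * β)) / ENNReal.ofReal (r ^ q) := by
              rw [← ENNReal.ofReal_mul (by positivity)]
          _ = ENNReal.ofReal (β ^ 2 * ((T + 2) * β) / r ^ q) :=
              (ENNReal.ofReal_div_of_pos hrqpos).symm
          _ = ENNReal.ofReal (C * β ^ ((3:ℝ) - δ * q)) := by rw [ereal]
end

section
/- Let d ∈ ℕ, α > 0, and let l : [0,∞) → [0,∞) be a continuous nondecreasing function with l(0) = 0 such that l(x) ≤ C₀(1 + x^p) for all x ≥ 0, for some constants C₀ > 0 and p > 0. For each n ∈ ℕ and each u ∈ ℝ^d with |u| ≤ α, let G_{n,u} be an ℝ^d-valued random vector on a probability space (Ω, F, P). Assume: (i) there exist q > p, K > 0 and n₀ ∈ ℕ such that sup_{n ≥ n₀} sup_{|u| ≤ α} E[ |G_{n,u}|^q ] ≤ K; and (ii) for every δ > 0 and ε > 0 there exists n₁ ∈ ℕ such that sup_{|u| ≤ α} P[ |G_{n,u} − G_{n,0}| > δ ] < ε for all n ≥ n₁. Then sup_{|u| ≤ α} | E[ l(|G_{n,u}|) ] − E[ l(|G_{n,0}|)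 ] | → 0 as n → ∞. -/
open MeasureTheory Filter Set ENNReal

set_option maxHeartbeats 1000000 in
/-- The uniform convergence of risk functions in the proof of Theorem 2.2
(Ogihara, LAMN for nonsynchronously observed diffusions): uniform convergence
in probability `G_{n,u} - G_{n,0} → 0` (uniformly over `|u| ≤ α`) together with
a uniform moment bound yields uniform convergence of the expected losses, for
continuous nondecreasing loss functions of polynomial growth vanishing at `0`. -/
theorem uniform_risk_convergence
    {Ω : Type*} [MeasurableSpace Ω] (P : Measure Ω) [IsProbabilityMeasure P]
    (d : ℕ) (α : ℝ) (hα : 0 < α)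
    (l : ℝ → ℝ) (hl_cont : ContinuousOn l (Set.Ici (0 : ℝ)))
    (hl_mono : MonotoneOn l (Set.Ici (0 : ℝ)))
    (hl_zero : l 0 = 0) (hl_nonneg : ∀ x : ℝ, 0 ≤ x → 0 ≤ l x)
    (C₀ p : ℝ) (hC₀ : 0 < C₀) (hp : 0 < p)
    (hl_growth : ∀ x : ℝ, 0 ≤ x → l x ≤ C₀ * (1 + x ^ p))
    (G : ℕ → EuclideanSpace ℝ (Fin d) → Ω → EuclideanSpace ℝ (Fin d))
    (hG_meas : ∀ n u, Measurable (G n u))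
    (hmom : ∃ q : ℝ, p < q ∧ ∃ K : ℝ, 0 < K ∧ ∃ n₀ : ℕ, ∀ n, n₀ ≤ n →
      ∀ u : EuclideanSpace ℝ (Fin d), ‖u‖ ≤ α →
        ∫⁻ ω, ENNReal.ofReal (‖G n u ω‖ ^ q) ∂P ≤ ENNReal.ofReal K)
    (hunif : ∀ δ : ℝ, 0 < δ → ∀ ε : ℝ, 0 < ε → ∃ n₁ : ℕ, ∀ n, n₁ ≤ n →
      ∀ u : EuclideanSpace ℝ (Fin d), ‖u‖ ≤ α →
        P {ω | δ < ‖G n u ω - G n 0 ω‖} < ENNReal.ofReal ε) :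
    ∀ ε : ℝ, 0 < ε → ∃ N : ℕ, ∀ n, N ≤ n →
      ∀ u : EuclideanSpace ℝ (Fin d), ‖u‖ ≤ α →
        |(∫ ω, l ‖G n u ω‖ ∂P) - ∫ ω, l ‖G n 0 ω‖ ∂P| ≤ ε := by
  intro ε hε
  obtain ⟨q, hpq, K, hK, n₀, hmom'⟩ := hmom
  -- measurability of l composed with a nonnegative measurable function
  have hl_meas : ∀ (f : Ω → ℝ), Measurable f → (∀ ω, 0 ≤ f ω) →
      Measurable (fun ω => l (f ω)) := by
    intro f hf hf0
    have hc : Continuous ((Set.Ici (0:ℝ)).restrict l) :=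
      continuousOn_iff_continuous_restrict.mp hl_cont
    have heq : (fun ω => l (f ω))
        = fun ω => (Set.Ici (0:ℝ)).restrict l ⟨f ω, hf0 ω⟩ := rfl
    rw [heq]
    exact hc.measurable.comp (hf.subtype_mk)
  -- choice of the truncation level M
  set M : ℝ := (max 1 (24*C₀*K/ε)) ^ (q - p)⁻¹ with hM_def
  have hqp : (0:ℝ) < q - p := by linarith
  have hM1 : 1 ≤ M := Real.one_le_rpow (le_max_left _ _) (by positivity)
  have hM0 : (0:ℝ) < M := lt_of_lt_of_le one_pos hM1
  have hMqp : M ^ (q-p) = max 1 (24*C₀*K/ε) :=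
    Real.rpow_inv_rpow (le_trans zero_le_one (le_max_left _ _)) hqp.ne'
  have hT0 : (0:ℝ) < M ^ (q-p) := by
    rw [hMqp]; exact lt_of_lt_of_le one_pos (le_max_left _ _)
  have hTail_const : 4*C₀*K/(M ^ (q-p)) ≤ ε/6 := by
    rw [div_le_iff₀ hT0]
    have h1 : 24*C₀*K/ε ≤ M ^ (q-p) := hMqp ▸ le_max_right _ _
    have h2 : ε/6 * (24*C₀*K/ε) = 4*C₀*K := by field_simp; ring
    nlinarith [mul_le_mul_of_nonneg_left h1 (by positivity : (0:ℝ) ≤ ε/6)]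
  -- modulus of continuity on [0, M+1]
  obtain ⟨δ₀, hδ₀, hδmod⟩ := (Metric.uniformContinuousOn_iff.mp
    ((isCompact_Icc : IsCompact (Set.Icc (0:ℝ) (M+1))).uniformContinuousOn_of_continuous
      (hl_cont.mono Set.Icc_subset_Ici_self))) (ε/3) (by positivity)
  set δ : ℝ := min (δ₀/2) 1 with hδ_def
  have hδpos : 0 < δ := lt_min (by linarith) one_pos
  have hδ1 : δ ≤ 1 := min_le_right _ _
  have hδlt : δ < δ₀ := lt_of_le_of_lt (min_le_left _ _) (by linarith)
  set c : ℝ := 2 * l (M+1) with hc_def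
  have hlM1 : 0 ≤ l (M+1) := hl_nonneg _ (by linarith)
  have hc0 : 0 ≤ c := by positivity
  set ε₁ : ℝ := ε / (3*(c+1)) with hε₁_def
  have hε₁ : 0 < ε₁ := by positivity
  obtain ⟨n₁, hn₁⟩ := hunif δ hδpos ε₁ hε₁
  refine ⟨max n₀ n₁, fun n hn u hu => ?_⟩
  have hn₀' : n₀ ≤ n := le_trans (le_max_left _ _) hn
  have hn₁' : n₁ ≤ n := le_trans (le_max_right _ _) hn
  have h0α : ‖(0 : EuclideanSpace ℝ (Fin d))‖ ≤ α := by simp [hα.le]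
  -- measurability facts
  have mGu := hG_meas n u
  have mG0 := hG_meas n 0
  have mnu : Measurable fun ω => ‖G n u ω‖ := mGu.norm
  have mn0 : Measurable fun ω => ‖G n 0 ω‖ := mG0.norm
  have mlu : Measurable fun ω => l ‖G n u ω‖ := hl_meas _ mnu (fun ω => norm_nonneg _)
  have ml0 : Measurable fun ω => l ‖G n 0 ω‖ := hl_meas _ mn0 (fun ω => norm_nonneg _)
  -- growth bound with exponent q
  have hxq_bound : ∀ x:ℝ, 0 ≤ x → l x ≤ C₀ * (2 + x ^ q) := by
    intro x hx
    have hq0 : 0 ≤ x ^ q := Real.rpow_nonneg hx q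
    have h1 : x ^ p ≤ 1 + x ^ q := by
      rcases le_or_gt x 1 with h|h
      · have := Real.rpow_le_one hx h hp.le
        linarith
      · have := Real.rpow_le_rpow_of_exponent_le h.le hpq.le
        linarith
    have := hl_growth x hx
    nlinarith
  -- integrability
  have hint : ∀ v : EuclideanSpace ℝ (Fin d), ‖v‖ ≤ α →
      Integrable (fun ω => l ‖G n v ω‖) P := by
    intro v hv
    have mq : Measurable fun ω => ENNReal.ofReal (‖G n v ω‖ ^ q) :=
      ((Real.continuous_rpow_const (by linarith : (0:ℝ) ≤ q)).measurable.comp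
        (hG_meas n v).norm).ennreal_ofReal
    refine ⟨(hl_meas _ (hG_meas n v).norm (fun ω => norm_nonneg _)).aestronglyMeasurable, ?_⟩
    rw [hasFiniteIntegral_iff_ofReal (Eventually.of_forall fun ω => hl_nonneg _ (norm_nonneg _))]
    calc ∫⁻ ω, ENNReal.ofReal (l ‖G n v ω‖) ∂P
        ≤ ∫⁻ ω, (ENNReal.ofReal (2*C₀) + ENNReal.ofReal C₀ * ENNReal.ofReal (‖G n v ω‖ ^ q)) ∂P := by
          refine lintegral_mono fun ω => ?_
          have hxq : (0:ℝ) ≤ ‖G n v ω‖ ^ q := Real.rpow_nonneg (norm_nonneg _) q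
          rw [← ENNReal.ofReal_mul hC₀.le, ← ENNReal.ofReal_add (by positivity)
            (mul_nonneg hC₀.le hxq)]
          exact ENNReal.ofReal_le_ofReal (by nlinarith [hxq_bound _ (norm_nonneg (G n v ω))])
      _ = ENNReal.ofReal (2*C₀) * P univ
          + ENNReal.ofReal C₀ * ∫⁻ ω, ENNReal.ofReal (‖G n v ω‖ ^ q) ∂P := by
          rw [lintegral_add_left measurable_const, lintegral_const, lintegral_const_mul _ mq]
      _ ≤ ENNReal.ofReal (2*C₀) + ENNReal.ofReal C₀ * ENNReal.ofReal K := by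
          rw [measure_univ, mul_one]
          exact add_le_add le_rfl (mul_le_mul_right (hmom' n hn₀' v hv) _)
      _ < ⊤ := by
          rw [← ENNReal.ofReal_mul hC₀.le]
          exact ENNReal.add_lt_top.mpr ⟨ENNReal.ofReal_lt_top, ENNReal.ofReal_lt_top⟩
  -- helper bound
  have hbound : ∀ x:ℝ, 0 ≤ x → l x ≤ l (M+1) + (if M < x then 2*C₀*(1+x^p) else 0) := by
    intro x hx
    have hxp : 0 ≤ x ^ p := Real.rpow_nonneg hx p
    split_ifs with h
    · have h1 : l x ≤ C₀*(1+x^p) := hl_growth x hx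
      nlinarith
    · push_neg at h
      have := hl_mono (Set.mem_Ici.mpr hx) (Set.mem_Ici.mpr (by linarith : (0:ℝ) ≤ M+1))
        (by linarith : x ≤ M+1)
      linarith
  -- the pointwise key inequality
  have key : ∀ ω, |l ‖G n u ω‖ - l ‖G n 0 ω‖| ≤ ε/3
      + (if δ < ‖G n u ω - G n 0 ω‖ then c else 0)
      + (if M < ‖G n u ω‖ then 2*C₀*(1+‖G n u ω‖^p) else 0)
      + (if M < ‖G n 0 ω‖ then 2*C₀*(1+‖G n 0 ω‖^p) else 0) := by
    intro ω
    have hx0 : (0:ℝ) ≤ ‖G n u ω‖ := norm_nonneg _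
    have hy0 : (0:ℝ) ≤ ‖G n 0 ω‖ := norm_nonneg _
    have hxy : |‖G n u ω‖ - ‖G n 0 ω‖| ≤ ‖G n u ω - G n 0 ω‖ := abs_norm_sub_norm_le _ _
    have hlx0 : 0 ≤ l ‖G n u ω‖ := hl_nonneg _ hx0
    have hly0 : 0 ≤ l ‖G n 0 ω‖ := hl_nonneg _ hy0
    have hxp : (0:ℝ) ≤ ‖G n u ω‖ ^ p := Real.rpow_nonneg hx0 p
    have hyp : (0:ℝ) ≤ ‖G n 0 ω‖ ^ p := Real.rpow_nonneg hy0 p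
    have habsle : |l ‖G n u ω‖ - l ‖G n 0 ω‖| ≤ l ‖G n u ω‖ + l ‖G n 0 ω‖ :=
      abs_sub_le_iff.mpr ⟨by linarith, by linarith⟩
    have hg3 : (0:ℝ) ≤ (if M < ‖G n u ω‖ then 2*C₀*(1+‖G n u ω‖^p) else 0) := by
      split_ifs
      · exact mul_nonneg (by linarith) (by linarith)
      · exact le_refl 0
    have hg4 : (0:ℝ) ≤ (if M < ‖G n 0 ω‖ then 2*C₀*(1+‖G n 0 ω‖^p) else 0) := by
      split_ifs
      · exact mul_nonneg (by linarith) (by linarith)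
      · exact le_refl 0
    by_cases hz : δ < ‖G n u ω - G n 0 ω‖
    · -- bad set: use the crude bound
      rw [if_pos hz]
      have h1 := hbound _ hx0
      have h2 := hbound _ hy0
      rw [hc_def]
      linarith
    · rw [if_neg hz]
      push_neg at hz
      by_cases hy : M < ‖G n 0 ω‖
      · -- tail of G 0
        rw [if_pos hy]
        have h2 : l ‖G n 0 ω‖ ≤ C₀*(1+‖G n 0 ω‖^p) := hl_growth _ hy0
        have hMp : M ^ p ≤ ‖G n 0 ω‖ ^ p := Real.rpow_le_rpow hM0.le hy.le hp.le
        have h1 : l ‖G n u ω‖ ≤ C₀*(1+‖G n 0 ω‖^p)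
            + (if M < ‖G n u ω‖ then 2*C₀*(1+‖G n u ω‖^p) else 0) := by
          split_ifs with h
          · have := hl_growth _ hx0
            nlinarith
          · push_neg at h
            have hlm : l ‖G n u ω‖ ≤ l M := hl_mono (Set.mem_Ici.mpr hx0)
              (Set.mem_Ici.mpr hM0.le) h
            have hlM : l M ≤ C₀*(1+M^p) := hl_growth M hM0.le
            nlinarith
        linarith
      · -- good set: uniform continuity
        push_neg at hy
        have hxmem : ‖G n u ω‖ ∈ Set.Icc (0:ℝ) (M+1) := by
          constructor
          · exact hx0
          · have h1 : ‖G n u ω‖ - ‖G n 0 ω‖ ≤ |‖G n u ω‖ - ‖G n 0 ω‖| := le_abs_self _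
            linarith
        have hymem : ‖G n 0 ω‖ ∈ Set.Icc (0:ℝ) (M+1) := ⟨hy0, by linarith⟩
        have hdist : dist ‖G n u ω‖ ‖G n 0 ω‖ < δ₀ := by
          rw [Real.dist_eq]
          exact lt_of_le_of_lt (le_trans hxy hz) hδlt
        have := hδmod _ hxmem _ hymem hdist
        rw [Real.dist_eq] at this
        linarith
  -- set measurability
  have hS1 : MeasurableSet {ω | δ < ‖G n u ω - G n 0 ω‖} :=
    measurableSet_lt measurable_const (mGu.sub mG0).norm
  have hS3 : MeasurableSet {ω | M < ‖G n u ω‖} := measurableSet_lt measurable_const mnu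
  have hS4 : MeasurableSet {ω | M < ‖G n 0 ω‖} := measurableSet_lt measurable_const mn0
  have mpow : ∀ v : EuclideanSpace ℝ (Fin d), Measurable fun ω => ‖G n v ω‖ ^ p :=
    fun v => (Real.continuous_rpow_const hp.le).measurable.comp (hG_meas n v).norm
  -- lintegral of the four pieces
  have mF2 : Measurable fun ω =>
      ENNReal.ofReal (if δ < ‖G n u ω - G n 0 ω‖ then c else 0) :=
    (Measurable.ite hS1 measurable_const measurable_const).ennreal_ofReal
  have mF3 : Measurable fun ω =>
      ENNReal.ofReal (if M < ‖G n u ω‖ then 2*C₀*(1+‖G n u ω‖^p) else 0) :=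
    (Measurable.ite hS3 ((measurable_const.add (mpow u)).const_mul _)
      measurable_const).ennreal_ofReal
  have mF4 : Measurable fun ω =>
      ENNReal.ofReal (if M < ‖G n 0 ω‖ then 2*C₀*(1+‖G n 0 ω‖^p) else 0) :=
    (Measurable.ite hS4 ((measurable_const.add (mpow 0)).const_mul _)
      measurable_const).ennreal_ofReal
  -- tail bound
  have hTail : ∀ v : EuclideanSpace ℝ (Fin d), ‖v‖ ≤ α →
      ∫⁻ ω, ENNReal.ofReal (if M < ‖G n v ω‖ then 2*C₀*(1+‖G n v ω‖^p) else 0) ∂P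
        ≤ ENNReal.ofReal (ε/6) := by
    intro v hv
    have mq : Measurable fun ω => ENNReal.ofReal (‖G n v ω‖ ^ q) :=
      ((Real.continuous_rpow_const (by linarith : (0:ℝ) ≤ q)).measurable.comp
        (hG_meas n v).norm).ennreal_ofReal
    calc ∫⁻ ω, ENNReal.ofReal (if M < ‖G n v ω‖ then 2*C₀*(1+‖G n v ω‖^p) else 0) ∂P
        ≤ ∫⁻ ω, ENNReal.ofReal (4*C₀/(M^(q-p))) * ENNReal.ofReal (‖G n v ω‖ ^ q) ∂P := by
          refine lintegral_mono fun ω => ?_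
          rw [← ENNReal.ofReal_mul (by positivity)]
          refine ENNReal.ofReal_le_ofReal ?_
          set x := ‖G n v ω‖ with hx_def
          have hx0 : (0:ℝ) ≤ x := norm_nonneg _
          split_ifs with h
          · -- M < x
            have hx1 : (1:ℝ) ≤ x := le_trans hM1 h.le
            have hxp1 : (1:ℝ) ≤ x ^ p := Real.one_le_rpow hx1 hp.le
            have hsplit : x ^ q = x ^ p * x ^ (q-p) := by
              rw [← Real.rpow_add (lt_of_lt_of_le one_pos hx1)]
              ring_nf
            have hmono : M ^ (q-p) ≤ x ^ (q-p) := Real.rpow_le_rpow hM0.le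
              (le_trans (le_refl M) h.le) hqp.le
            have hxp0 : (0:ℝ) ≤ x ^ p := by linarith
            have h1 : 2*C₀*(1+x^p) ≤ 4*C₀*(x^p) := by nlinarith
            have h2 : x ^ p * (M^(q-p)) ≤ x ^ q := by
              rw [hsplit]
              exact mul_le_mul_of_nonneg_left hmono hxp0
            rw [div_mul_eq_mul_div, le_div_iff₀ hT0]
            nlinarith
          · have hxq : (0:ℝ) ≤ x ^ q := Real.rpow_nonneg hx0 q
            positivity
      _ = ENNReal.ofReal (4*C₀/(M^(q-p))) * ∫⁻ ω, ENNReal.ofReal (‖G n v ω‖ ^ q) ∂P :=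
          lintegral_const_mul _ mq
      _ ≤ ENNReal.ofReal (4*C₀/(M^(q-p))) * ENNReal.ofReal K :=
          mul_le_mul_right (hmom' n hn₀' v hv) _
      _ = ENNReal.ofReal (4*C₀/(M^(q-p)) * K) := (ENNReal.ofReal_mul (by positivity)).symm
      _ ≤ ENNReal.ofReal (ε/6) := by
          refine ENNReal.ofReal_le_ofReal ?_
          rw [div_mul_eq_mul_div]
          exact hTail_const
  -- bound for the bad-set piece
  have hB1 : ∫⁻ ω, ENNReal.ofReal (if δ < ‖G n u ω - G n 0 ω‖ then c else 0) ∂P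
      ≤ ENNReal.ofReal (ε/3) := by
    have heq : (fun ω => ENNReal.ofReal (if δ < ‖G n u ω - G n 0 ω‖ then c else 0))
        = Set.indicator {ω | δ < ‖G n u ω - G n 0 ω‖} (fun _ => ENNReal.ofReal c) := by
      funext ω
      rw [Set.indicator_apply]
      simp only [Set.mem_setOf_eq]
      split_ifs with h
      · rfl
      · exact ENNReal.ofReal_zero
    rw [heq, lintegral_indicator hS1, setLIntegral_const]
    calc ENNReal.ofReal c * P {ω | δ < ‖G n u ω - G n 0 ω‖}
        ≤ ENNReal.ofReal c * ENNReal.ofReal ε₁ :=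
          mul_le_mul_right (hn₁ n hn₁' u hu).le _
      _ = ENNReal.ofReal (c * ε₁) := (ENNReal.ofReal_mul hc0).symm
      _ ≤ ENNReal.ofReal (ε/3) := by
          refine ENNReal.ofReal_le_ofReal ?_
          have h1 : (c+1) * ε₁ = ε/3 := by
            rw [hε₁_def]
            field_simp
          nlinarith
  -- total lintegral bound
  have hF : ∫⁻ ω, ENNReal.ofReal |l ‖G n u ω‖ - l ‖G n 0 ω‖| ∂P ≤ ENNReal.ofReal ε := by
    have hg2 : ∀ ω, (0:ℝ) ≤ (if δ < ‖G n u ω - G n 0 ω‖ then c else 0) := by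
      intro ω; split_ifs; exacts [hc0, le_refl 0]
    have hg3 : ∀ ω, (0:ℝ) ≤ (if M < ‖G n u ω‖ then 2*C₀*(1+‖G n u ω‖^p) else 0) := by
      intro ω
      have := Real.rpow_nonneg (norm_nonneg (G n u ω)) p
      split_ifs
      · nlinarith
      · exact le_refl 0
    have hg4 : ∀ ω, (0:ℝ) ≤ (if M < ‖G n 0 ω‖ then 2*C₀*(1+‖G n 0 ω‖^p) else 0) := by
      intro ω
      have := Real.rpow_nonneg (norm_nonneg (G n 0 ω)) p
      split_ifs
      · nlinarith
      · exact le_refl 0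
    calc ∫⁻ ω, ENNReal.ofReal |l ‖G n u ω‖ - l ‖G n 0 ω‖| ∂P
        ≤ ∫⁻ ω, (ENNReal.ofReal (ε/3)
            + ENNReal.ofReal (if δ < ‖G n u ω - G n 0 ω‖ then c else 0)
            + ENNReal.ofReal (if M < ‖G n u ω‖ then 2*C₀*(1+‖G n u ω‖^p) else 0)
            + ENNReal.ofReal (if M < ‖G n 0 ω‖ then 2*C₀*(1+‖G n 0 ω‖^p) else 0)) ∂P := by
          refine lintegral_mono fun ω => ?_
          rw [← ENNReal.ofReal_add (by positivity) (hg2 ω),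
            ← ENNReal.ofReal_add (add_nonneg (by positivity) (hg2 ω)) (hg3 ω),
            ← ENNReal.ofReal_add (add_nonneg (add_nonneg (by positivity) (hg2 ω)) (hg3 ω)) (hg4 ω)]
          exact ENNReal.ofReal_le_ofReal (key ω)
      _ = ENNReal.ofReal (ε/3) * P univ
          + (∫⁻ ω, ENNReal.ofReal (if δ < ‖G n u ω - G n 0 ω‖ then c else 0) ∂P)
          + (∫⁻ ω, ENNReal.ofReal (if M < ‖G n u ω‖ then 2*C₀*(1+‖G n u ω‖^p) else 0) ∂P)
          + (∫⁻ ω, ENNReal.ofReal (if M < ‖G n 0 ω‖ then 2*C₀*(1+‖G n 0 ω‖^p) else 0) ∂P) := by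
          rw [lintegral_add_left (f := fun ω => ENNReal.ofReal (ε/3) + ENNReal.ofReal (if δ < ‖G n u ω - G n 0 ω‖ then c else 0) + ENNReal.ofReal (if M < ‖G n u ω‖ then 2*C₀*(1+‖G n u ω‖^p) else 0)) ((measurable_const.add mF2).add mF3),
            lintegral_add_left (f := fun ω => ENNReal.ofReal (ε/3) + ENNReal.ofReal (if δ < ‖G n u ω - G n 0 ω‖ then c else 0)) (measurable_const.add mF2),
            lintegral_add_left measurable_const, lintegral_const]
      _ ≤ ENNReal.ofReal (ε/3) + ENNReal.ofReal (ε/3)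
          + ENNReal.ofReal (ε/6) + ENNReal.ofReal (ε/6) := by
          rw [measure_univ, mul_one]
          exact add_le_add (add_le_add (add_le_add le_rfl hB1) (hTail u hu)) (hTail 0 h0α)
      _ = ENNReal.ofReal ε := by
          rw [← ENNReal.ofReal_add (by positivity) (by positivity),
            ← ENNReal.ofReal_add (by positivity) (by positivity),
            ← ENNReal.ofReal_add (by positivity) (by positivity)]
          congr 1
          ring
  -- conclude
  have habs : |(∫ ω, l ‖G n u ω‖ ∂P) - ∫ ω, l ‖G n 0 ω‖ ∂P|
      ≤ ∫ ω, |l ‖G n u ω‖ - l ‖G n 0 ω‖| ∂P := by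
    rw [← integral_sub (hint u hu) (hint 0 h0α)]
    simpa [Real.norm_eq_abs] using
      norm_integral_le_integral_norm (μ := P) (fun ω => l ‖G n u ω‖ - l ‖G n 0 ω‖)
  have heq : ∫ ω, |l ‖G n u ω‖ - l ‖G n 0 ω‖| ∂P
      = (∫⁻ ω, ENNReal.ofReal |l ‖G n u ω‖ - l ‖G n 0 ω‖| ∂P).toReal :=
    integral_eq_lintegral_of_nonneg_ae (Eventually.of_forall fun ω => abs_nonneg _)
      ((mlu.sub ml0).abs.aestronglyMeasurable)
  rw [heq] at habs
  exact habs.trans (ENNReal.toReal_le_of_le_ofReal hε.le hF)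
end
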